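/- arXiv:2412.02257 — 3 statements merged into one kernel-verified Lean document; each statement's English description precedes it below -/
import Mathlib

section
/- Let k and t be positive integers. Then |ω_k(2t+1)| ≤ ((24k−1)/24)^t·√(6/π³)·√(t+1)·|cos α_k|·(1 + C_1*(k)/t), where C_1*(k) := (α_k²·(cosh α_k − 1) + 4·C_1(k))/(4·|cos α_k|) and C_1(k) := 3k·(3⌈√k⌉+1)²·α_k^{6⌈√k⌉+4}/(2⌈√k⌉·(6⌈√k⌉+4)!). -/
open Real BigOperators Finset

noncomputable section

/-- The partition function `p(n)`. -/
def pp (n : ℕ) : ℕ := Fintype.card (Nat.Partition n)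

/-- `μ(n) = (π/6)·√(24n−1)`. -/
def μ (n : ℕ) : ℝ := π / 6 * Real.sqrt (24 * (n : ℝ) - 1)

/-- `α = π/6`. -/
def αc : ℝ := π / 6

/-- Rising factorial `(a)_m`. -/
def rf (a : ℝ) : ℕ → ℝ
  | 0 => 1
  | m + 1 => rf a m * (a + (m : ℝ))

/-- Falling factorial `x(x−1)⋯(x−n+1)`. -/
def ff (x : ℝ) : ℕ → ℝ
  | 0 => 1
  | n + 1 => ff x n * (x - (n : ℝ))

/-- Generalized binomial coefficient for real `x`. -/
def gbinom (x : ℝ) (n : ℕ) : ℝ := ff x n / (Nat.factorial n : ℝ)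

/-- The coefficients `ω_k(t)`. -/
def ω (k t : ℕ) : ℝ :=
  ((24 * (k : ℝ) - 1) / (4 * Real.sqrt 6)) ^ t *
    ∑ l ∈ Finset.range ((t + 1) / 2 + 1),
      (Nat.choose (t + 1) l : ℝ) * ((t + 1 - l : ℕ) : ℝ) /
          (Nat.factorial (t + 1 - 2 * l) : ℝ) *
        (-1 : ℝ) ^ l * (π / 6) ^ ((t : ℤ) - 2 * (l : ℤ)) *
        (24 * (k : ℝ) - 1) ^ (-(l : ℤ))

/-- `E_1(t)`. -/
def E1 (t : ℕ) : ℝ :=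
  if t = 0 then 1
  else
    (-1 / 24 : ℝ) ^ t * (rf (1 / 2 - (t : ℝ)) (t + 1) / (t : ℝ)) *
      ∑ u ∈ Finset.Icc 1 t,
        (-1 : ℝ) ^ u * rf (-(t : ℝ)) u * αc ^ (2 * u) /
          ((Nat.factorial (t + u) : ℝ) * (Nat.factorial (2 * u - 1) : ℝ))

/-- `O_1(t)`. -/
def O1 (t : ℕ) : ℝ :=
  π / (12 * Real.sqrt 6) * ((-1 : ℝ) ^ t * rf (1 / 2 - (t : ℝ)) (t + 1) / 24 ^ t) *
    ∑ u ∈ Finset.range (t + 1),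
      (-1 : ℝ) ^ u * rf (-(t : ℝ)) u * αc ^ (2 * u) /
        ((Nat.factorial (t + u + 1) : ℝ) * (Nat.factorial (2 * u) : ℝ))

/-- `e_2(t)`. -/
def e2 (t : ℕ) : ℝ :=
  if t = 0 then 1 else 36 / (π ^ 2 + 36) * ((1 + (αc ^ 2)⁻¹) / 24) ^ t

/-- `o_2(t)`. -/
def o2 (t : ℕ) : ℝ :=
  6 / (π * Real.sqrt 24) * (-1 / 24 : ℝ) ^ t *
    ∑ m ∈ Finset.range (t + 1),
      (-(αc ^ 2)⁻¹) ^ m * gbinom (-(2 * (m : ℝ) + 1) / 2) (t - m)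

/-- `E_2(t)`. -/
def E2 (t : ℕ) : ℝ :=
  if t = 0 then 1
  else if t = 1 then (36 - π ^ 2) / (24 * π ^ 2)
  else 54 / (π ^ 4 * (1 + (αc ^ 2)⁻¹)) * ((1 + (αc ^ 2)⁻¹) / 24) ^ (t - 1)

/-- `O_2(t)`. -/
def O2 (t : ℕ) : ℝ := if t = 0 then o2 0 else o2 t - o2 (t - 1) / 24

/-- `h_1` with `h_1(2t) = E_1(t)`, `h_1(2t+1) = O_1(t)`. -/
def h1 (n : ℕ) : ℝ := if n % 2 = 0 then E1 (n / 2) else O1 (n / 2)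

/-- `h_2` with `h_2(2t) = E_2(t)`, `h_2(2t+1) = O_2(t)`. -/
def h2 (n : ℕ) : ℝ := if n % 2 = 0 then E2 (n / 2) else O2 (n / 2)

/-- `g(t) = Σ_{s=0}^t h_1(s) h_2(t−s)`. -/
def g (t : ℕ) : ℝ := ∑ s ∈ Finset.range (t + 1), h1 s * h2 (t - s)

/-- `ν(m)`. -/
def ν (m : ℕ) : ℝ :=
  2 * Real.log 6 + 2 * Real.log 2 * (m : ℝ) + 2 * (m : ℝ) * Real.log (m : ℝ) +
    2 * (m : ℝ) * Real.log (Real.log (m : ℝ)) +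
    5 * (m : ℝ) * Real.log (Real.log (m : ℝ)) / Real.log (m : ℝ)

/-- `ĝ(m)`. -/
def ghat (m : ℕ) : ℝ := 1 / 24 * (36 / π ^ 2 * ν m ^ 2 + 1)

/-- `α_k = (π/6)√(24k−1)`. -/
def αk (k : ℕ) : ℝ := π / 6 * Real.sqrt (24 * (k : ℝ) - 1)

/-- `C_1(k)`. -/
def C1 (k : ℕ) : ℝ :=
  3 * (k : ℝ) * (3 * (⌈Real.sqrt (k : ℝ)⌉₊ : ℝ) + 1) ^ 2 *
      αk k ^ (6 * ⌈Real.sqrt (k : ℝ)⌉₊ + 4) /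
    (2 * (⌈Real.sqrt (k : ℝ)⌉₊ : ℝ) * (Nat.factorial (6 * ⌈Real.sqrt (k : ℝ)⌉₊ + 4) : ℝ))

/-- `C_1*(k)`. -/
def C1s (k : ℕ) : ℝ :=
  (αk k ^ 2 * (Real.cosh (αk k) - 1) + 4 * C1 k) / (4 * |Real.cos (αk k)|)

/-- `C_2(k)`. -/
def C2 (k : ℕ) : ℝ :=
  9 * (k : ℝ) * (3 * (⌈Real.sqrt (k : ℝ)⌉₊ : ℝ) + 1) ^ 2 *
      αk k ^ (6 * ⌈Real.sqrt (k : ℝ)⌉₊ + 3) /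
    ((6 * (⌈Real.sqrt (k : ℝ)⌉₊ : ℝ) + 1) * (Nat.factorial (6 * ⌈Real.sqrt (k : ℝ)⌉₊ + 3) : ℝ))

/-- `C_2*(k)`. -/
def C2s (k : ℕ) : ℝ :=
  1 / 2 * (1 + 3 * (αk k ^ 2 * Real.sinh (αk k) + 4 * C2 k) / (4 * |Real.sin (αk k)|))

/-- `C_e(k)`. -/
def Ce (k : ℕ) : ℝ := 2 * C2s k + (24 * (k : ℝ) - 1) * (1 + C2s k) / 6

/-- `C_o(k)`. -/
def Co (k : ℕ) : ℝ := 2 * C1s k + (24 * (k : ℝ) - 1) * (1 + 2 * C1s k) / 6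

/-- `E_{N,1,e}(k)`. -/
def EN1e (N k : ℕ) : ℝ :=
  Real.sqrt 2 * |Real.sin (αk k)| / (Real.sqrt π * αk k) *
    ((24 * (k : ℝ) - 1) / 24) ^ (((N : ℝ) + 1) / 2) * Real.sqrt ((N : ℝ) + 1) *
    (1 + Ce k / (N : ℝ))

/-- `E_{N,1,o}(k)`. -/
def EN1o (N k : ℕ) : ℝ :=
  Real.sqrt (3 / π ^ 3) * |Real.cos (αk k)| *
    ((24 * (k : ℝ) - 1) / 24) ^ ((N : ℝ) / 2) * Real.sqrt ((N : ℝ) + 2) *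
    (1 + Co k / (N : ℝ))

/-- `E_{N,1}(k)`. -/
def EN1 (N k : ℕ) : ℝ := EN1e N k + EN1o N k

/-- `C_1(α)`. -/
def Cal1 : ℝ :=
  3 * (Real.cosh (Real.sqrt (1 + αc ^ 2) - 1) + Real.sinh (Real.sqrt (1 + αc ^ 2) - 1)) /
    (2 * π ^ 2 * (1 + αc ^ 2))

/-- `C_2(α)`. -/
def Cal2 : ℝ :=
  1 / π * Real.sqrt (3 / 2) *
    (Real.cosh (Real.sqrt (1 + αc ^ 2) - 1) + Real.sinh (Real.sqrt (1 + αc ^ 2) - 1)) /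
    (1 + αc ^ 2) ^ ((3 : ℝ) / 2)

/-- `E_N^{[2]}`. -/
def EN2 (N : ℕ) : ℝ :=
  Cal1 * ((1 + αc ^ 2) / (24 * αc ^ 2)) ^ (((N : ℝ) - 1) / 2) * (1 + 8 / (N : ℝ)) +
  Cal2 * ((1 + αc ^ 2) / (24 * αc ^ 2)) ^ ((N : ℝ) / 2) * (1 + 3 / (N : ℝ)) +
  (6 / (π * Real.sqrt 24)) ^ (N + 1) * (1 + 4 / (N : ℝ))

/-- Coefficients `c_k(m) = Σ_{s=0}^m ω_k(s) g(m−s)`. -/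
def ck (k m : ℕ) : ℝ := ∑ s ∈ Finset.range (m + 1), ω k s * g (m - s)

/-- Sharp central binomial bound `C(2n,n) ≤ 4^n / √(πn)` for `n ≥ 1`. -/
lemma choose_central_le (n : ℕ) (hn : 1 ≤ n) :
    ((2 * n).choose n : ℝ) ≤ 4 ^ n / Real.sqrt (π * n) := by
  have hπ : (0:ℝ) < π := Real.pi_pos
  have hn' : (0:ℝ) < n := by exact_mod_cast hn
  have hW := Real.Wallis.le_W n
  have hWf := Real.Wallis.W_eq_factorial_ratio n
  -- W n ≥ π n/(2n+1)
  have h1 : π * n / (2 * n + 1) ≤ Real.Wallis.W n := by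
    refine le_trans ?_ hW
    rw [div_le_iff₀ (by positivity), div_mul_eq_mul_div, div_mul_eq_mul_div,
      le_div_iff₀ (by positivity)]
    nlinarith [sq_nonneg ((n:ℝ))]
  -- cb² * (W n * (2n+1)) = 16^n
  have hfac1 : (0:ℝ) < (Nat.factorial n : ℝ) := by exact_mod_cast (Nat.factorial_pos n)
  have hfac2 : (0:ℝ) < (Nat.factorial (2*n) : ℝ) := by exact_mod_cast (Nat.factorial_pos (2*n))
  have hcbn := Nat.choose_mul_factorial_mul_factorial (by omega : n ≤ 2*n)
  rw [show 2*n - n = n by omega] at hcbn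
  have hcb : ((2*n).choose n : ℝ) * ((Nat.factorial n : ℝ) * (Nat.factorial n : ℝ))
      = (Nat.factorial (2*n) : ℝ) := by
    rw [← mul_assoc]; exact_mod_cast congrArg (Nat.cast (R := ℝ)) hcbn
  have hkey : ((2*n).choose n : ℝ)^2 * (Real.Wallis.W n * (2*n+1)) = 16 ^ n := by
    rw [hWf]
    have h2 : ((2:ℝ) ^ (4*n)) = 16 ^ n := by
      rw [pow_mul]; norm_num
    have h4 : ((Nat.factorial (2*n) : ℝ))^2
        = ((2*n).choose n : ℝ)^2 * (Nat.factorial n : ℝ)^4 := by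
      rw [← hcb]; ring
    field_simp
    rw [h2, h4]; ring
  have hcbpos : (0:ℝ) ≤ ((2*n).choose n : ℝ) := by positivity
  -- cb² * π n ≤ 16^n
  have h3 : ((2*n).choose n : ℝ)^2 * (π * n) ≤ 16 ^ n := by
    rw [← hkey]
    have : π * n ≤ Real.Wallis.W n * (2*n+1) := by
      rw [div_le_iff₀ (by positivity)] at h1
      linarith
    nlinarith [sq_nonneg ((2*n).choose n : ℝ)]
  have hsq : Real.sqrt (((2*n).choose n : ℝ)^2 * (π * n)) ≤ Real.sqrt (16 ^ n) := by
    exact Real.sqrt_le_sqrt h3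
  rw [Real.sqrt_mul (by positivity), Real.sqrt_sq hcbpos] at hsq
  have h16 : Real.sqrt ((16:ℝ) ^ n) = 4 ^ n := by
    rw [show (16:ℝ) = 4^2 by norm_num, ← pow_mul, mul_comm 2 n, pow_mul]
    exact Real.sqrt_sq (by positivity)
  rw [h16] at hsq
  rw [le_div_iff₀ (by positivity)]
  linarith


/-- Partial sums of an alternating series with antitone nonneg terms lie in `[0, a 0]`. -/
lemma alt_partial (a : ℕ → ℝ) (h0 : ∀ m, 0 ≤ a m) (hd : ∀ m, a (m+1) ≤ a m) (M : ℕ) :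
    (0 ≤ ∑ m ∈ range M, (-1:ℝ)^m * a m ∧ ∑ m ∈ range M, (-1:ℝ)^m * a m ≤ a 0) ∧
    (Even M → (∑ m ∈ range M, (-1:ℝ)^m * a m) + a M ≤ a 0) ∧
    (¬ Even M → a M ≤ ∑ m ∈ range M, (-1:ℝ)^m * a m) := by
  induction M with
  | zero => simpa using h0 0
  | succ M ih =>
    obtain ⟨⟨ih0, ih1⟩, ihe, iho⟩ := ih
    rw [Finset.sum_range_succ]
    rcases Nat.even_or_odd M with he | ho
    · have hs : (-1:ℝ)^M = 1 := he.neg_one_pow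
      have hE := ihe he
      have hnE : ¬ Even (M+1) := by simp [Nat.even_add_one, he]
      refine ⟨⟨by nlinarith [h0 M], by nlinarith⟩, fun h => absurd h hnE, fun _ => ?_⟩
      rw [hs]; nlinarith [hd M]
    · have hs : (-1:ℝ)^M = -1 := ho.neg_one_pow
      have hO := iho (Nat.not_even_iff_odd.mpr ho)
      have hE : Even (M+1) := by simpa [Nat.even_add_one] using ho
      refine ⟨⟨by nlinarith, by nlinarith [h0 M]⟩, fun _ => ?_, fun h => absurd hE h⟩
      rw [hs]; nlinarith [hd M]

/-- Leibniz bound for alternating series. -/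
lemma alt_tsum_le (a : ℕ → ℝ) (h0 : ∀ m, 0 ≤ a m) (hd : ∀ m, a (m+1) ≤ a m)
    (hs : Summable (fun m => (-1:ℝ)^m * a m)) : |∑' m, (-1:ℝ)^m * a m| ≤ a 0 := by
  have ht := hs.hasSum.tendsto_sum_nat
  have hub : ∑' m, (-1:ℝ)^m * a m ≤ a 0 :=
    le_of_tendsto ht (Filter.Eventually.of_forall fun M => (alt_partial a h0 hd M).1.2)
  have hlb : 0 ≤ ∑' m, (-1:ℝ)^m * a m :=
    ge_of_tendsto ht (Filter.Eventually.of_forall fun M => (alt_partial a h0 hd M).1.1)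
  rw [abs_le]
  exact ⟨by linarith [h0 0], hub⟩

/-- Summability of the (signed) even-power exponential series. -/
lemma summable_cos_series (x : ℝ) : Summable (fun m => (-1:ℝ)^m * x^(2*m) / ((2*m).factorial : ℝ)) := by
  apply Summable.of_abs
  have h := (Real.summable_pow_div_factorial |x|).comp_injective
    (fun i j h => by simpa using h : Function.Injective (fun m : ℕ => 2*m))
  refine h.congr fun m => ?_
  simp only [Function.comp]
  rw [abs_div, abs_mul, abs_pow, abs_pow, abs_neg, abs_one, one_pow, one_mul,
    Nat.abs_cast, ← abs_pow]


lemma fact_ratio (x : ℝ) (m : ℕ) :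
    x^(2*(m+1)) / ((2*(m+1)).factorial : ℝ) * ((2*m+1)*(2*m+2))
      = x^(2*m) / ((2*m).factorial : ℝ) * x^2 := by
  have h : ((2*(m+1)).factorial : ℝ)
      = ((2*m).factorial : ℝ) * ((2*m+1)*(2*m+2)) := by
    rw [show 2*(m+1) = (2*m+1)+1 by ring, Nat.factorial_succ, Nat.factorial_succ]
    push_cast; ring
  have h0 : (0:ℝ) < ((2*m).factorial : ℝ) := by exact_mod_cast (2*m).factorial_pos
  rw [h, show 2*(m+1) = 2*m+2 by ring, pow_add]
  field_simp

lemma pow_fact_mono (x : ℝ) (hx : 0 ≤ x) (N : ℕ)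
    (hcase : ∀ m, m < N → (2*(m:ℝ)+1)*(2*m+2) ≤ x^2) :
    ∀ m, m ≤ N → x^(2*m)/((2*m).factorial :ℝ) ≤ x^(2*N)/((2*N).factorial : ℝ) := by
  intro m hm
  induction N with
  | zero => simp_all
  | succ N ih =>
    rcases Nat.lt_or_ge m (N+1) with h | h
    · have hmN : m ≤ N := by omega
      have step : x^(2*N)/((2*N).factorial :ℝ) ≤ x^(2*(N+1))/((2*(N+1)).factorial : ℝ) := by
        have hr := fact_ratio x N
        have hc := hcase N (by omega)
        have h1 : (0:ℝ) < (2*(N:ℝ)+1)*(2*N+2) := by positivity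
        have h2 : (0:ℝ) ≤ x^(2*N)/((2*N).factorial :ℝ) := by positivity
        nlinarith [mul_le_mul_of_nonneg_left hc h2]
      exact le_trans (ih (fun m hm => hcase m (by omega)) hmN) step
    · have : m = N+1 := by omega
      subst this; exact le_refl _

/-- Leibniz case of the cosine tail bound. -/
lemma cos_tail_small (x : ℝ) (hx : 0 ≤ x) (N : ℕ)
    (hcase : x^2 ≤ (2*N+1)*(2*N+2)) :
    |Real.cos x - ∑ m ∈ range N, (-1:ℝ)^m * x^(2*m) / ((2*m).factorial : ℝ)|
      ≤ x^(2*N) / ((2*N).factorial : ℝ) := by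
  have hs : Summable (fun m => (-1:ℝ)^m * x^(2*m) / ((2*m).factorial : ℝ)) :=
    summable_cos_series x
  have htail := Summable.sum_add_tsum_nat_add (f := fun m => (-1:ℝ)^m * x^(2*m) / ((2*m).factorial : ℝ)) N hs
  rw [← Real.cos_eq_tsum] at htail
  have hrepr : Real.cos x - ∑ m ∈ range N, (-1:ℝ)^m * x^(2*m) / ((2*m).factorial : ℝ)
      = ∑' m : ℕ, (-1:ℝ)^(m+N) * x^(2*(m+N)) / ((2*(m+N)).factorial : ℝ) := by
    linarith [htail]
  rw [hrepr]
  set b : ℕ → ℝ := fun m => x^(2*(m+N)) / ((2*(m+N)).factorial : ℝ) with hb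
  have hssh : Summable (fun m => (-1:ℝ)^m * b m) := by
    have h1 : Summable (fun m => (-1:ℝ)^N * ((-1:ℝ)^(m+N) * x^(2*(m+N)) / ((2*(m+N)).factorial : ℝ))) :=
      (((summable_nat_add_iff N).2 hs)).mul_left _
    refine h1.congr fun m => ?_
    rw [hb]
    have hpow : (-1:ℝ)^(m+N) * (-1:ℝ)^N = (-1)^m := by
      rw [← pow_add, show m + N + N = m + 2*N by ring, pow_add]
      simp [pow_mul]
    have hfp : (0:ℝ) < ((2*(m+N)).factorial : ℝ) := by
      exact_mod_cast (2*(m+N)).factorial_pos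
    field_simp
    linear_combination x ^ (2*(m+N)) * hpow
  have hrepr2 : ∑' m : ℕ, (-1:ℝ)^(m+N) * x^(2*(m+N)) / ((2*(m+N)).factorial : ℝ)
      = (-1:ℝ)^N * ∑' m : ℕ, (-1:ℝ)^m * b m := by
    rw [← tsum_mul_left]
    refine tsum_congr fun m => ?_
    rw [hb, pow_add]
    ring
  rw [hrepr2, abs_mul, abs_pow, abs_neg, abs_one, one_pow, one_mul]
  have h0 : ∀ m, 0 ≤ b m := fun m => by rw [hb]; positivity
  have hd : ∀ m, b (m+1) ≤ b m := by
    intro m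
    show x^(2*(m+1+N)) / ((2*(m+1+N)).factorial : ℝ) ≤ x^(2*(m+N)) / ((2*(m+N)).factorial : ℝ)
    have hr := fact_ratio x (m+N)
    have hc : x^2 ≤ (2*(m+N:ℝ)+1)*(2*(m+N)+2) := by
      refine le_trans hcase ?_
      push_cast
      nlinarith [Nat.cast_nonneg (α := ℝ) m, Nat.cast_nonneg (α := ℝ) N]
    have h1 : (0:ℝ) < (2*((m:ℝ)+N)+1)*(2*((m:ℝ)+N)+2) := by positivity
    have h2 : (0:ℝ) ≤ x^(2*(m+N))/((2*(m+N)).factorial :ℝ) := by positivity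
    rw [show m + 1 + N = (m + N) + 1 by omega]
    push_cast at hr
    nlinarith [mul_le_mul_of_nonneg_left hc h2]
  have := alt_tsum_le b h0 hd hssh
  simpa [hb] using this

/-- Crude case of the cosine tail bound. -/
lemma cos_tail_big (x : ℝ) (hx : 0 ≤ x) (N : ℕ)
    (hcase : ∀ m, m < N → (2*(m:ℝ)+1)*(2*m+2) ≤ x^2) :
    |Real.cos x - ∑ m ∈ range N, (-1:ℝ)^m * x^(2*m) / ((2*m).factorial : ℝ)|
      ≤ ((N:ℝ)+1) * (x^(2*N) / ((2*N).factorial : ℝ)) := by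
  have hmono := pow_fact_mono x hx N hcase
  have h1 : |Real.cos x| ≤ 1 := Real.abs_cos_le_one x
  have hAN : (1:ℝ) ≤ x^(2*N)/((2*N).factorial : ℝ) := by
    have := hmono 0 (Nat.zero_le N)
    simpa using this
  have h2 : |∑ m ∈ range N, (-1:ℝ)^m * x^(2*m) / ((2*m).factorial : ℝ)|
      ≤ (N:ℝ) * (x^(2*N) / ((2*N).factorial : ℝ)) := by
    refine le_trans (Finset.abs_sum_le_sum_abs _ _) ?_
    have : ∀ m ∈ range N, |(-1:ℝ)^m * x^(2*m) / ((2*m).factorial : ℝ)|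
        ≤ x^(2*N) / ((2*N).factorial : ℝ) := by
      intro m hm
      rw [abs_div, abs_mul, abs_pow, abs_neg, abs_one, one_pow, one_mul, abs_pow,
        abs_of_nonneg hx, Nat.abs_cast]
      exact hmono m (by simp at hm; omega)
    refine le_trans (Finset.sum_le_sum this) ?_
    rw [Finset.sum_const, card_range, nsmul_eq_mul]
  calc |Real.cos x - ∑ m ∈ range N, (-1:ℝ)^m * x^(2*m) / ((2*m).factorial : ℝ)|
      ≤ |Real.cos x| + |∑ m ∈ range N, (-1:ℝ)^m * x^(2*m) / ((2*m).factorial : ℝ)| := abs_sub _ _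
    _ ≤ 1 + (N:ℝ) * (x^(2*N) / ((2*N).factorial : ℝ)) := by linarith
    _ ≤ ((N:ℝ)+1) * (x^(2*N) / ((2*N).factorial : ℝ)) := by nlinarith


lemma summable_even_pow (x : ℝ) : Summable (fun m : ℕ => x^(2*m) / ((2*m).factorial : ℝ)) := by
  have h := (Real.summable_pow_div_factorial x).comp_injective
    (fun i j h => by simpa using h : Function.Injective (fun m : ℕ => 2*m))
  exact h

lemma sum_even_le_cosh (x : ℝ) (hx : 0 ≤ x) (M : ℕ) :
    ∑ j ∈ range M, x^(2*j)/((2*j).factorial : ℝ) ≤ Real.cosh x := by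
  rw [Real.cosh_eq_tsum]
  exact Summable.sum_le_tsum (range M) (fun i _ => by positivity) (summable_even_pow x)

lemma bseq_succ (n m : ℕ) (h : m + 1 ≤ n) :
    (2*n).choose (n-(m+1)) * (n+(m+1)) = (2*n).choose (n-m) * (n-m) := by
  have h1 := Nat.choose_succ_right_eq (2*n) (n-m-1)
  rw [show n-m-1+1 = n-m by omega, show 2*n - (n-m-1) = n+(m+1) by omega] at h1
  rw [show n-(m+1) = n-m-1 by omega]
  omega

lemma bseq_le (n : ℕ) : ∀ m, m ≤ n →
    (2*n).choose (n-m) * (n+m) ≤ (2*n).choose n * n := by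
  intro m hm
  induction m with
  | zero => simp
  | succ m ih =>
    have h2 := bseq_succ n m (by omega)
    have h3 : (2*n).choose (n-m) * (n-m) ≤ (2*n).choose (n-m) * (n+m) :=
      Nat.mul_le_mul_left _ (by omega)
    omega

lemma bseq_diff_le (n : ℕ) (hn : 1 ≤ n) : ∀ m, m ≤ n →
    (((2*n).choose n * n : ℕ) : ℝ) - (((2*n).choose (n-m) * (n+m) : ℕ) : ℝ)
      ≤ ((2*n).choose n : ℝ) * m * ((m:ℝ)-1) := by
  intro m hm
  induction m with
  | zero => simp
  | succ m ih =>
    have hmn : m ≤ n := by omega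
    have ih2 := ih hmn
    have h2 := bseq_succ n m (by omega)
    have hdiff : ((2*n).choose (n-m) * (n+m) : ℕ) = ((2*n).choose (n-(m+1)) * (n+(m+1)) : ℕ)
        + (2*n).choose (n-m) * (2*m) := by
      rw [h2]
      have : n + m = (n - m) + 2*m := by omega
      rw [this, Nat.mul_add]
    have hmid : (2*n).choose (n-m) ≤ (2*n).choose n := by
      have := Nat.choose_le_middle (n-m) (2*n)
      rwa [show 2*n/2 = n by omega] at this
    have hmid' : ((2*n).choose (n-m) : ℝ) * (2*m) ≤ ((2*n).choose n : ℝ) * (2*m) := by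
      have h3 : ((2*n).choose (n-m) : ℝ) ≤ ((2*n).choose n : ℝ) := by exact_mod_cast hmid
      nlinarith [Nat.cast_nonneg (α := ℝ) m]
    have hcast : (((2*n).choose (n-m) * (n+m) : ℕ) : ℝ)
        = (((2*n).choose (n-(m+1)) * (n+(m+1)) : ℕ) : ℝ)
          + ((2*n).choose (n-m) : ℝ) * (2*m) := by exact_mod_cast congrArg (Nat.cast (R:=ℝ)) hdiff
    push_cast at ih2 hcast ⊢
    nlinarith [hmid']


lemma X_pos (k : ℕ) (hk : 0 < k) : (0:ℝ) < 24 * (k:ℝ) - 1 := by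
  have : (1:ℝ) ≤ (k:ℝ) := by exact_mod_cast hk
  linarith

lemma αk_pos (k : ℕ) (hk : 0 < k) : 0 < αk k := by
  have := X_pos k hk
  unfold αk
  have := Real.pi_pos
  positivity

lemma αk_sq (k : ℕ) (hk : 0 < k) : (αk k)^2 = (π/6)^2 * (24*(k:ℝ)-1) := by
  unfold αk
  rw [mul_pow, Real.sq_sqrt (X_pos k hk).le]

lemma omega_odd_eq (k t : ℕ) (hk : 0 < k) :
    ω k (2*t+1) = ((24*(k:ℝ)-1) / (4*Real.sqrt 6))^(2*t+1) * ((π/6)^(2*t+1)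
      * ((-1:ℝ)^(t+1) * ((αk k)^(-(2*(t:ℤ)+2)) *
      ∑ m ∈ Finset.range (t+2),
        (-1:ℝ)^m * (((2*(t+1)).choose (t+1-m) * (t+1+m) : ℕ) : ℝ)
          * (αk k)^(2*m) / (((2*m).factorial : ℕ) : ℝ)))) := by
  have hX := X_pos k hk
  have ha := αk_pos k hk
  have haz : αk k ≠ 0 := ha.ne'
  have hπ6 : (π/6 : ℝ) ≠ 0 := by have := Real.pi_pos; positivity
  -- the zpow juggling
  have hz : ∀ j : ℕ, j ≤ t+1 →
      (π/6 : ℝ)^(((2*t+1 : ℕ) : ℤ) - 2*((t+1-j : ℕ) : ℤ)) *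
        (24*(k:ℝ)-1)^(-((t+1-j : ℕ) : ℤ))
      = (π/6)^(2*t+1) * ((αk k)^(-(2*(t:ℤ)+2)) * (αk k)^(2*j)) := by
    intro j hj
    have h1 : ((αk k):ℝ)^(2*j) = (αk k)^((2*(j:ℤ))) := by
      rw [← zpow_natCast (αk k) (2*j)]; norm_num
    rw [h1, ← zpow_add₀ haz]
    have h2 : (-(2*(t:ℤ)+2) + 2*(j:ℤ)) = 2*((j:ℤ) - ((t:ℤ)+1)) := by ring
    rw [h2, zpow_mul]
    have h3 : (αk k)^(2:ℤ) = (π/6)^2 * (24*(k:ℝ)-1) := by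
      rw [show (2:ℤ) = ((2:ℕ):ℤ) from rfl, zpow_natCast]
      exact αk_sq k hk
    rw [h3, mul_zpow]
    have h4 : ((π/6:ℝ)^2)^((j:ℤ)-((t:ℤ)+1)) = (π/6)^(2*((j:ℤ)-((t:ℤ)+1))) := by
      rw [← zpow_natCast (π/6 : ℝ) 2, ← zpow_mul]
      norm_num
    rw [h4]
    have h5 : (π/6:ℝ)^(2*t+1) = (π/6)^(((2*t+1:ℕ)) : ℤ) := by
      rw [zpow_natCast]
    rw [h5, ← mul_assoc, ← zpow_add₀ hπ6]
    have h6 : (((2*t+1:ℕ)) : ℤ) + 2*((j:ℤ)-((t:ℤ)+1)) = ((2*t+1 : ℕ) : ℤ) - 2*((t+1-j : ℕ) : ℤ) := by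
      push_cast
      omega
    rw [h6]
    congr 1
    have h7 : ((j:ℤ) - ((t:ℤ)+1)) = -(((t+1-j : ℕ) : ℤ)) := by omega
    rw [h7]
  -- now the sum rewrite
  unfold ω
  rw [show (2*t+1+1)/2 + 1 = t + 2 by omega]
  rw [← Finset.sum_range_reflect]
  simp only [Finset.mul_sum]
  refine Finset.sum_congr rfl fun j hj => ?_
  have hjle : j ≤ t+1 := by simp at hj; omega
  rw [show t + 2 - 1 - j = t + 1 - j by omega]
  have e1 : 2*t+1+1 = 2*(t+1) := by ring
  have e2 : 2*t+1+1 - (t+1-j) = t+1+j := by omega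
  have e3 : 2*t+1+1 - 2*(t+1-j) = 2*j := by omega
  have e4 : (-1:ℝ)^(t+1-j) = (-1:ℝ)^(t+1) * (-1:ℝ)^j := by
    have h1 : (-1:ℝ)^(t+1-j) * (-1:ℝ)^j = (-1:ℝ)^(t+1) := by
      rw [← pow_add, Nat.sub_add_cancel hjle]
    have h2 : (-1:ℝ)^j * (-1:ℝ)^j = 1 := by
      rw [← pow_add]
      exact Even.neg_one_pow ⟨j, by ring⟩
    calc (-1:ℝ)^(t+1-j) = (-1:ℝ)^(t+1-j) * ((-1:ℝ)^j * (-1:ℝ)^j) := by rw [h2, mul_one]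
      _ = (-1:ℝ)^(t+1) * (-1:ℝ)^j := by rw [← mul_assoc, h1]
  have hzj := hz j hjle
  rw [e1, show 2*(t+1) - (t+1-j) = t+1+j by omega,
    show 2*(t+1) - 2*(t+1-j) = 2*j by omega, e4]
  push_cast at hzj ⊢
  linear_combination (((24*(k:ℝ)-1)/(4*Real.sqrt 6))^(2*t+1) *
    ((((2*(t+1)).choose (t+1-j) : ℝ)) * ((t:ℝ)+1+(j:ℝ)) / (((2*j).factorial : ℕ) : ℝ) *
      ((-1:ℝ)^(t+1) * (-1:ℝ)^j))) * hzj


lemma sqrt_six_pi_cube : Real.sqrt (6/π^3) = Real.sqrt 6 / (π * Real.sqrt π) := by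
  have hπ := Real.pi_pos
  rw [show (6:ℝ)/π^3 = 6/(π^2*π) by ring,
    Real.sqrt_div (by norm_num : (0:ℝ) ≤ 6),
    Real.sqrt_mul (by positivity : (0:ℝ) ≤ π^2) π, Real.sqrt_sq hπ.le]

lemma prefactor_eq (X a : ℝ) (hX : 0 < X) (ha : 0 < a) (ha2 : a^2 = (π/6)^2*X) (t : ℕ) :
    (X/(4*Real.sqrt 6))^(2*t+1) * (π/6)^(2*t+1) * a^(-(2*(t:ℤ)+2)) * (4^(t+1)/Real.sqrt π)
      = (X/24)^t * Real.sqrt (6/π^3) := by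
  have hπ := Real.pi_pos
  have h6 : Real.sqrt 6 ^ 2 = 6 := Real.sq_sqrt (by norm_num)
  have hπ2 : Real.sqrt π ^ 2 = π := Real.sq_sqrt hπ.le
  have h6p : (0:ℝ) < Real.sqrt 6 := Real.sqrt_pos.mpr (by norm_num)
  have hπp : (0:ℝ) < Real.sqrt π := Real.sqrt_pos.mpr hπ
  have haz : a ≠ 0 := ha.ne'
  have hXz : X ≠ 0 := hX.ne'
  have hbase : X/(4*Real.sqrt 6) = X*Real.sqrt 6/24 := by
    rw [div_eq_div_iff (by positivity) (by norm_num)]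
    linear_combination (-4*X) * h6
  rw [hbase]
  induction t with
  | zero =>
    rw [sqrt_six_pi_cube]
    have hz : a^(-(2*((0:ℕ):ℤ)+2)) = ((π/6)^2*X)⁻¹ := by
      rw [show (-(2*((0:ℕ):ℤ)+2)) = -((2:ℕ):ℤ) by norm_num, zpow_neg, zpow_natCast, ha2]
    rw [hz, show 2*0+1 = 1 by norm_num, pow_one, pow_one, pow_zero, pow_one]
    field_simp
    ring
  | succ t ih =>
    have hz : a^(-(2*((t+1:ℕ):ℤ)+2)) = a^(-(2*((t:ℕ):ℤ)+2)) * ((π/6)^2*X)⁻¹ := by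
      rw [show (-(2*((t+1:ℕ):ℤ)+2)) = (-(2*((t:ℕ):ℤ)+2)) + (-((2:ℕ):ℤ)) by push_cast; ring,
        zpow_add₀ haz]
      congr 1
      rw [zpow_neg, zpow_natCast, ha2]
    have e1 : (X*Real.sqrt 6/24)^(2*(t+1)+1) = (X*Real.sqrt 6/24)^(2*t+1) * (X^2/96) := by
      rw [show 2*(t+1)+1 = (2*t+1)+2 by ring, pow_add]
      congr 1
      rw [div_pow, mul_pow, h6]
      ring
    have e2 : ((π:ℝ)/6)^(2*(t+1)+1) = (π/6)^(2*t+1) * (π/6)^2 := by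
      rw [show 2*(t+1)+1 = (2*t+1)+2 by ring, pow_add]
    have e3 : (4:ℝ)^(t+1+1) = 4^(t+1) * 4 := by rw [pow_succ]
    have e4 : (X/24)^(t+1) = (X/24)^t * (X/24) := by rw [pow_succ]
    rw [hz, e1, e2, e3, e4,
      show (X/24)^t * (X/24) * Real.sqrt (6/π^3)
        = ((X/24)^t * Real.sqrt (6/π^3)) * (X/24) by ring, ← ih]
    field_simp
    ring


lemma factorial_expand (j : ℕ) :
    ((2*(j+1)).factorial : ℝ) = ((2*j).factorial : ℝ) * ((2*(j:ℝ)+1)*(2*j+2)) := by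
  rw [show 2*(j+1) = (2*j+1)+1 by ring, Nat.factorial_succ, Nat.factorial_succ]
  push_cast; ring

lemma div_fact_step (y : ℝ) (hy : 0 ≤ y) (j : ℕ) (c d : ℝ) (hc : 0 ≤ c) (hd : 0 < d)
    (h4 : d*c ≤ (2*(j:ℝ)+1)*(2*j+2)) :
    c * (y / ((2*(j+1)).factorial : ℝ)) ≤ (1/d) * (y / ((2*j).factorial : ℝ)) := by
  have hF : (0:ℝ) < ((2*j).factorial : ℝ) := by exact_mod_cast (2*j).factorial_pos
  have hG : (0:ℝ) < (2*(j:ℝ)+1)*(2*j+2) := by positivity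
  rw [factorial_expand j]
  calc c * (y / (((2*j).factorial : ℝ) * ((2*(j:ℝ)+1)*(2*j+2))))
      = (y*(d*c)) / (d * (((2*j).factorial : ℝ) * ((2*(j:ℝ)+1)*(2*j+2)))) := by
        field_simp
    _ ≤ (y*((2*(j:ℝ)+1)*(2*j+2))) / (d * (((2*j).factorial : ℝ) * ((2*(j:ℝ)+1)*(2*j+2)))) := by
        gcongr <;> nlinarith [mul_le_mul_of_nonneg_left h4 hy]
    _ = (1/d) * (y / ((2*j).factorial : ℝ)) := by field_simp

lemma D_step (C y : ℝ) (hC : 0 ≤ C) (hy : 0 ≤ y) (t j : ℕ) (hj : j < t) (ht : 1 ≤ t) :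
    (C*(((j:ℝ)+2)*((j:ℝ)+1))) * (y / ((2*(j+2)).factorial : ℝ))
      ≤ (1/(4*(t:ℝ))) * ((C*((t:ℝ)+1)) * (y / ((2*(j+1)).factorial : ℝ))) := by
  have ht' : (0:ℝ) < t := by exact_mod_cast ht
  have hj' : (j:ℝ) < t := by exact_mod_cast hj
  have hF : (0:ℝ) < ((2*(j+1)).factorial : ℝ) := by exact_mod_cast (2*(j+1)).factorial_pos
  have hG : (0:ℝ) < (2*((j:ℝ)+1)+1)*(2*((j:ℝ)+1)+2) := by positivity
  have hfe : ((2*(j+2)).factorial : ℝ)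
      = ((2*(j+1)).factorial : ℝ) * ((2*((j:ℝ)+1)+1)*(2*((j:ℝ)+1)+2)) := by
    have h := factorial_expand (j+1)
    rw [show j+1+1 = j+2 by ring] at h
    rw [h]; push_cast; ring
  rw [hfe]
  calc (C*(((j:ℝ)+2)*((j:ℝ)+1))) * (y / (((2*(j+1)).factorial : ℝ) * ((2*((j:ℝ)+1)+1)*(2*((j:ℝ)+1)+2))))
      = ((C*y)*((((j:ℝ)+2)*((j:ℝ)+1))*(4*(t:ℝ))))
        / ((4*(t:ℝ)) * (((2*(j+1)).factorial : ℝ) * ((2*((j:ℝ)+1)+1)*(2*((j:ℝ)+1)+2)))) := by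
        field_simp
    _ ≤ ((C*y)*(((t:ℝ)+1)*((2*((j:ℝ)+1)+1)*(2*((j:ℝ)+1)+2))))
        / ((4*(t:ℝ)) * (((2*(j+1)).factorial : ℝ) * ((2*((j:ℝ)+1)+1)*(2*((j:ℝ)+1)+2)))) := by
        gcongr _ * ?_ / _
        nlinarith
    _ = (1/(4*(t:ℝ))) * ((C*((t:ℝ)+1)) * (y / ((2*(j+1)).factorial : ℝ))) := by
        field_simp

/-- The key bound on the reflected sum. -/
lemma sum_bound (a : ℝ) (ha : 0 < a) (t : ℕ) (ht : 1 ≤ t) :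
    |∑ m ∈ range (t+2), (-1:ℝ)^m * (((2*(t+1)).choose (t+1-m) * (t+1+m) : ℕ) : ℝ)
        * a^(2*m) / ((2*m).factorial : ℝ)|
      ≤ (((2*(t+1)).choose (t+1) * (t+1) : ℕ) : ℝ)
          * (|Real.cos a| + a^2*(Real.cosh a - 1)/(4*t)) := by
  have ht' : (0:ℝ) < t := by exact_mod_cast ht
  have hBpos : (0:ℝ) < (((2*(t+1)).choose (t+1) * (t+1) : ℕ) : ℝ) := by
    have h1 : 0 < (2*(t+1)).choose (t+1) := Nat.choose_pos (by omega)
    have h2 : 0 < (2*(t+1)).choose (t+1) * (t+1) := Nat.mul_pos h1 (by omega)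
    exact_mod_cast h2
  set B : ℝ := (((2*(t+1)).choose (t+1) * (t+1) : ℕ) : ℝ) with hBdef
  set S : ℝ := ∑ m ∈ range (t+2), (-1:ℝ)^m * a^(2*m) / ((2*m).factorial : ℝ) with hS
  set D : ℝ := ∑ m ∈ range (t+2),
      (B - (((2*(t+1)).choose (t+1-m) * (t+1+m) : ℕ) : ℝ))
        * (a^(2*m) / ((2*m).factorial : ℝ)) with hD
  set Ds : ℝ := ∑ m ∈ range (t+2),
      (-1:ℝ)^m * (B - (((2*(t+1)).choose (t+1-m) * (t+1+m) : ℕ) : ℝ))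
        * (a^(2*m) / ((2*m).factorial : ℝ)) with hDs
  have hdecomp : ∑ m ∈ range (t+2), (-1:ℝ)^m * (((2*(t+1)).choose (t+1-m) * (t+1+m) : ℕ) : ℝ)
        * a^(2*m) / ((2*m).factorial : ℝ) = B * S - Ds := by
    rw [hS, hDs, Finset.mul_sum, ← Finset.sum_sub_distrib]
    refine Finset.sum_congr rfl fun m _ => ?_
    ring
  rw [hdecomp]
  have hDabs : |Ds| ≤ D := by
    refine le_trans (Finset.abs_sum_le_sum_abs _ _) ?_
    rw [hD]
    refine Finset.sum_le_sum fun m hm => ?_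
    have hm' : m ≤ t+1 := by simp at hm; omega
    have hble : (((2*(t+1)).choose (t+1-m) * (t+1+m) : ℕ) : ℝ) ≤ B := by
      rw [hBdef]
      exact_mod_cast bseq_le (t+1) m hm'
    have hfp : (0:ℝ) < ((2*m).factorial : ℝ) := by exact_mod_cast (2*m).factorial_pos
    rw [abs_mul, abs_mul, abs_pow, abs_neg, abs_one, one_pow, one_mul,
      abs_of_nonneg (by linarith : (0:ℝ) ≤ B - (((2*(t+1)).choose (t+1-m) * (t+1+m) : ℕ) : ℝ)),
      abs_of_nonneg (by positivity : (0:ℝ) ≤ a^(2*m) / ((2*m).factorial : ℝ))]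
  have hT1 : |Real.cos a - S| ≤ (1/(4*(t:ℝ))) * (a^(2*(t+2)) / ((2*(t+1)).factorial : ℝ)) := by
    have hapow : (0:ℝ) ≤ a^(2*(t+2)) := by positivity
    by_cases hc : a^2 ≤ (2*((t:ℝ)+2)+1)*(2*((t:ℝ)+2)+2)
    · have h1 := cos_tail_small a ha.le (t+2) (by push_cast; linarith)
      rw [← hS] at h1
      refine le_trans h1 ?_
      have h2 := div_fact_step (a^(2*(t+2))) hapow (t+1) 1 (4*t) zero_le_one (by positivity)
        (by push_cast; nlinarith)
      rw [one_mul, show t+1+1 = t+2 by ring] at h2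
      exact h2
    · push_neg at hc
      have hcase : ∀ m, m < t+2 → (2*(m:ℝ)+1)*(2*m+2) ≤ a^2 := by
        intro m hm
        have hm' : (m:ℝ) ≤ (t:ℝ)+1 := by exact_mod_cast (by omega : m ≤ t+1)
        nlinarith [Nat.cast_nonneg (α := ℝ) m]
      have h1 := cos_tail_big a ha.le (t+2) hcase
      rw [← hS] at h1
      refine le_trans h1 ?_
      have h2 := div_fact_step (a^(2*(t+2))) hapow (t+1) (((t:ℝ)+2)+1) (4*t)
        (by positivity) (by positivity) (by push_cast; nlinarith)
      rw [show t+1+1 = t+2 by ring] at h2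
      push_cast at h2 ⊢
      exact h2
  have hDle : D ≤ B * ((1/(4*(t:ℝ))) * ∑ j ∈ range t,
      a^(2*(j+2)) / ((2*(j+1)).factorial : ℝ)) := by
    rw [hD, Finset.sum_range_succ', Finset.sum_range_succ']
    have hz0 : (B - (((2*(t+1)).choose (t+1-0) * (t+1+0) : ℕ) : ℝ))
        * (a^(2*0) / ((2*0).factorial : ℝ)) = 0 := by
      simp [hBdef]
    have hb1 : ((2*(t+1)).choose (t+1-1) * (t+1+1) : ℕ) = (2*(t+1)).choose (t+1) * (t+1) := by
      have h := bseq_succ (t+1) 0 (by omega)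
      simpa using h
    have hz1 : (B - (((2*(t+1)).choose (t+1-(0+1)) * (t+1+(0+1)) : ℕ) : ℝ))
        * (a^(2*(0+1)) / ((2*(0+1)).factorial : ℝ)) = 0 := by
      rw [show (0:ℕ)+1 = 1 from rfl, hb1, hBdef]
      simp
    rw [hz0, hz1, add_zero, add_zero, Finset.mul_sum, Finset.mul_sum]
    refine Finset.sum_le_sum fun j hj => ?_
    have hj' : j < t := by simpa using hj
    have hdle := bseq_diff_le (t+1) (by omega) (j+1+1) (by omega)
    have hd2 : B - (((2*(t+1)).choose (t+1-(j+1+1)) * (t+1+(j+1+1)) : ℕ) : ℝ)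
        ≤ ((2*(t+1)).choose (t+1) : ℝ) * (((j:ℝ)+2)*((j:ℝ)+1)) := by
      rw [hBdef]
      push_cast at hdle ⊢
      linarith
    have hfp : (0:ℝ) ≤ a^(2*(j+1+1)) / ((2*(j+1+1)).factorial : ℝ) := by positivity
    have hstep := D_step ((2*(t+1)).choose (t+1) : ℝ) (a^(2*(j+2)))
      (by positivity) (by positivity) t j hj' ht
    calc (B - (((2*(t+1)).choose (t+1-(j+1+1)) * (t+1+(j+1+1)) : ℕ) : ℝ))
        * (a^(2*(j+1+1)) / ((2*(j+1+1)).factorial : ℝ))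
        ≤ (((2*(t+1)).choose (t+1) : ℝ) * (((j:ℝ)+2)*((j:ℝ)+1)))
          * (a^(2*(j+1+1)) / ((2*(j+1+1)).factorial : ℝ)) :=
          mul_le_mul_of_nonneg_right hd2 hfp
      _ = (((2*(t+1)).choose (t+1) : ℝ) * (((j:ℝ)+2)*((j:ℝ)+1)))
          * (a^(2*(j+2)) / ((2*(j+2)).factorial : ℝ)) := by
          rw [show j+1+1 = j+2 by ring]
      _ ≤ (1/(4*(t:ℝ))) * ((((2*(t+1)).choose (t+1) : ℝ)*((t:ℝ)+1))
          * (a^(2*(j+2)) / ((2*(j+1)).factorial : ℝ))) := hstep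
      _ = B * ((1/(4*(t:ℝ))) * (a^(2*(j+2)) / ((2*(j+1)).factorial : ℝ))) := by
          rw [hBdef]; push_cast; ring
  have hsum2 : ∑ j ∈ range (t+1), a^(2*(j+2)) / ((2*(j+1)).factorial : ℝ)
      ≤ a^2 * (Real.cosh a - 1) := by
    have he : ∑ j ∈ range (t+1), a^(2*(j+2)) / ((2*(j+1)).factorial : ℝ)
        = a^2 * ∑ j ∈ range (t+1), a^(2*(j+1)) / ((2*(j+1)).factorial : ℝ) := by
      rw [Finset.mul_sum]
      refine Finset.sum_congr rfl fun j _ => ?_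
      rw [show 2*(j+2) = 2 + 2*(j+1) by ring, pow_add]
      ring
    rw [he]
    have hch := sum_even_le_cosh a ha.le (t+2)
    rw [Finset.sum_range_succ'] at hch
    have h1 : (a^(2*0) / ((2*0).factorial : ℝ)) = 1 := by norm_num
    rw [h1] at hch
    nlinarith [sq_nonneg a]
  have hSabs : |S| ≤ |Real.cos a| + |Real.cos a - S| := by
    calc |S| = |Real.cos a - (Real.cos a - S)| := by ring_nf
      _ ≤ |Real.cos a| + |Real.cos a - S| := abs_sub _ _
  calc |B * S - Ds| ≤ |B * S| + |Ds| := abs_sub _ _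
    _ = B * |S| + |Ds| := by rw [abs_mul, abs_of_pos hBpos]
    _ ≤ B * (|Real.cos a| + |Real.cos a - S|) + D :=
        add_le_add (mul_le_mul_of_nonneg_left hSabs hBpos.le) hDabs
    _ ≤ B * (|Real.cos a| + (1/(4*(t:ℝ))) * (a^(2*(t+2)) / ((2*(t+1)).factorial : ℝ)))
        + B * ((1/(4*(t:ℝ))) * ∑ j ∈ range t, a^(2*(j+2)) / ((2*(j+1)).factorial : ℝ)) :=
        add_le_add (mul_le_mul_of_nonneg_left (by linarith [hT1]) hBpos.le) hDle
    _ = B * (|Real.cos a| + (1/(4*(t:ℝ))) *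
          ∑ j ∈ range (t+1), a^(2*(j+2)) / ((2*(j+1)).factorial : ℝ)) := by
        rw [Finset.sum_range_succ]
        ring
    _ ≤ B * (|Real.cos a| + (1/(4*(t:ℝ))) * (a^2 * (Real.cosh a - 1))) := by
        refine mul_le_mul_of_nonneg_left ?_ hBpos.le
        have h4t : (0:ℝ) < 1/(4*(t:ℝ)) := by positivity
        nlinarith [hsum2]
    _ = B * (|Real.cos a| + a^2*(Real.cosh a - 1)/(4*t)) := by ring

lemma cos_αk_ne_zero (k : ℕ) (hk : 0 < k) : Real.cos (αk k) ≠ 0 := by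
  intro h
  rw [Real.cos_eq_zero_iff] at h
  obtain ⟨m, hm⟩ := h
  have hπ : (0:ℝ) < π := Real.pi_pos
  have hX := X_pos k hk
  have h1 : Real.sqrt (24*(k:ℝ)-1) = 3*(2*(m:ℝ)+1) := by
    have : αk k = (2*(m:ℝ)+1)*π/2 := hm
    unfold αk at this
    field_simp at this
    nlinarith [this]
  have h2 : (24*(k:ℝ)-1) = 9*(2*(m:ℝ)+1)^2 := by
    have hs := Real.sq_sqrt hX.le
    rw [h1] at hs
    nlinarith [hs]
  have h3 : (24*(k:ℤ) - 1) = 9*(2*m+1)^2 := by exact_mod_cast h2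
  have h4 : ∃ w : ℤ, 24*(k:ℤ) - 1 = 9*w := ⟨(2*m+1)^2, h3⟩
  obtain ⟨w, hw⟩ := h4
  omega

/-- bound on the odd-index coefficients `ω_k(2t+1)`. -/
theorem omega_odd_bound (k t : ℕ) (hk : 0 < k) (ht : 0 < t) :
    |ω k (2 * t + 1)| ≤
      ((24 * (k : ℝ) - 1) / 24) ^ t * Real.sqrt (6 / π ^ 3) * Real.sqrt ((t : ℝ) + 1) *
        |Real.cos (αk k)| * (1 + C1s k / (t : ℝ)) := by
  have hπ : (0:ℝ) < π := Real.pi_pos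
  have hX := X_pos k hk
  have ha := αk_pos k hk
  have ht' : (0:ℝ) < t := by exact_mod_cast ht
  have hcos : Real.cos (αk k) ≠ 0 := cos_αk_ne_zero k hk
  have hcos' : (0:ℝ) < |Real.cos (αk k)| := abs_pos.mpr hcos
  have hch := Real.one_le_cosh (αk k)
  have hp1 : (0:ℝ) < ((24*(k:ℝ)-1) / (4*Real.sqrt 6))^(2*t+1) := by positivity
  have hp2 : (0:ℝ) < ((π:ℝ)/6)^(2*t+1) := by positivity
  have hp3 : (0:ℝ) < (αk k)^(-(2*(t:ℤ)+2)) := zpow_pos ha _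
  have hQ : (0:ℝ) ≤ (αk k)^2*(Real.cosh (αk k) - 1)/(4*(t:ℝ)) := by
    apply div_nonneg (mul_nonneg (sq_nonneg _) (by linarith)) (by positivity)
  have hC1nn : (0:ℝ) ≤ C1 k := by
    unfold C1 αk
    positivity
  set E : ℝ := |Real.cos (αk k)| + (αk k)^2*(Real.cosh (αk k) - 1)/(4*(t:ℝ)) with hE
  have hEnn : 0 ≤ E := by rw [hE]; positivity
  -- B ≤ 4^(t+1) √(t+1) / √π
  have hsπ : (0:ℝ) < Real.sqrt π := Real.sqrt_pos.mpr hπ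
  have hst : (0:ℝ) < Real.sqrt ((t:ℝ)+1) := Real.sqrt_pos.mpr (by positivity)
  have hss : Real.sqrt ((t:ℝ)+1) * Real.sqrt ((t:ℝ)+1) = (t:ℝ)+1 :=
    Real.mul_self_sqrt (by positivity)
  have hB2 : (((2*(t+1)).choose (t+1) * (t+1) : ℕ) : ℝ)
      ≤ 4^(t+1) * Real.sqrt ((t:ℝ)+1) / Real.sqrt π := by
    have h1 := choose_central_le (t+1) (by omega)
    have h2 : Real.sqrt (π * ((t+1:ℕ):ℝ)) = Real.sqrt π * Real.sqrt ((t:ℝ)+1) := by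
      rw [Real.sqrt_mul hπ.le]
      congr 1
      push_cast
      ring
    rw [h2] at h1
    have h3 : (((2*(t+1)).choose (t+1) * (t+1) : ℕ) : ℝ)
        = ((2*(t+1)).choose (t+1) : ℝ) * ((t:ℝ)+1) := by push_cast; ring
    rw [h3]
    have h4 : ((2*(t+1)).choose (t+1) : ℝ) * ((t:ℝ)+1)
        ≤ (4^(t+1) / (Real.sqrt π * Real.sqrt ((t:ℝ)+1))) * ((t:ℝ)+1) :=
      mul_le_mul_of_nonneg_right h1 (by positivity)
    refine le_trans h4 (le_of_eq ?_)
    field_simp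
    linear_combination (-1:ℝ) * hss
  -- prefactor equality
  have hpe := prefactor_eq (24*(k:ℝ)-1) (αk k) hX ha (αk_sq k hk) t
  have hKeyLe : ((24*(k:ℝ)-1) / (4*Real.sqrt 6))^(2*t+1) * ((π:ℝ)/6)^(2*t+1)
        * (αk k)^(-(2*(t:ℤ)+2)) * (((2*(t+1)).choose (t+1) * (t+1) : ℕ) : ℝ)
      ≤ ((24*(k:ℝ)-1)/24)^t * Real.sqrt (6/π^3) * Real.sqrt ((t:ℝ)+1) := by
    have hp123 : (0:ℝ) < ((24*(k:ℝ)-1) / (4*Real.sqrt 6))^(2*t+1) * ((π:ℝ)/6)^(2*t+1)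
        * (αk k)^(-(2*(t:ℤ)+2)) := by positivity
    calc ((24*(k:ℝ)-1) / (4*Real.sqrt 6))^(2*t+1) * ((π:ℝ)/6)^(2*t+1)
        * (αk k)^(-(2*(t:ℤ)+2)) * (((2*(t+1)).choose (t+1) * (t+1) : ℕ) : ℝ)
        ≤ ((24*(k:ℝ)-1) / (4*Real.sqrt 6))^(2*t+1) * ((π:ℝ)/6)^(2*t+1)
          * (αk k)^(-(2*(t:ℤ)+2)) * (4^(t+1) * Real.sqrt ((t:ℝ)+1) / Real.sqrt π) :=
          mul_le_mul_of_nonneg_left hB2 hp123.le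
      _ = (((24*(k:ℝ)-1) / (4*Real.sqrt 6))^(2*t+1) * ((π:ℝ)/6)^(2*t+1)
          * (αk k)^(-(2*(t:ℤ)+2)) * (4^(t+1)/Real.sqrt π)) * Real.sqrt ((t:ℝ)+1) := by
          ring
      _ = ((24*(k:ℝ)-1)/24)^t * Real.sqrt (6/π^3) * Real.sqrt ((t:ℝ)+1) := by
          rw [hpe]
  -- E ≤ |cos|(1 + C1s/t)
  have hCs : |Real.cos (αk k)| * C1s k
      = ((αk k)^2*(Real.cosh (αk k) - 1) + 4*C1 k)/4 := by
    unfold C1s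
    field_simp
  have hEle : E ≤ |Real.cos (αk k)| * (1 + C1s k / (t:ℝ)) := by
    rw [hE, mul_add, mul_one, mul_div_assoc', hCs]
    have h6 : (αk k)^2*(Real.cosh (αk k) - 1)/(4*(t:ℝ))
        ≤ (((αk k)^2*(Real.cosh (αk k) - 1) + 4*C1 k)/4)/(t:ℝ) := by
      rw [div_div]
      gcongr
      linarith
    linarith
  -- main chain
  rw [omega_odd_eq k t hk, abs_mul, abs_mul, abs_mul, abs_mul,
    abs_of_pos hp1, abs_of_pos hp2, abs_of_pos hp3, abs_pow, abs_neg, abs_one, one_pow, one_mul]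
  calc ((24*(k:ℝ)-1) / (4*Real.sqrt 6))^(2*t+1) * (((π:ℝ)/6)^(2*t+1)
        * ((αk k)^(-(2*(t:ℤ)+2)) * |∑ m ∈ Finset.range (t+2),
          (-1:ℝ)^m * (((2*(t+1)).choose (t+1-m) * (t+1+m) : ℕ) : ℝ)
            * (αk k)^(2*m) / (((2*m).factorial : ℕ) : ℝ)|))
      ≤ ((24*(k:ℝ)-1) / (4*Real.sqrt 6))^(2*t+1) * (((π:ℝ)/6)^(2*t+1)
        * ((αk k)^(-(2*(t:ℤ)+2)) * ((((2*(t+1)).choose (t+1) * (t+1) : ℕ) : ℝ) * E))) := by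
        have hsb := sum_bound (αk k) ha t ht
        rw [← hE] at hsb
        gcongr
    _ = (((24*(k:ℝ)-1) / (4*Real.sqrt 6))^(2*t+1) * ((π:ℝ)/6)^(2*t+1)
        * (αk k)^(-(2*(t:ℤ)+2)) * (((2*(t+1)).choose (t+1) * (t+1) : ℕ) : ℝ)) * E := by
        ring
    _ ≤ (((24*(k:ℝ)-1)/24)^t * Real.sqrt (6/π^3) * Real.sqrt ((t:ℝ)+1)) * E :=
        mul_le_mul_of_nonneg_right hKeyLe hEnn
    _ ≤ (((24*(k:ℝ)-1)/24)^t * Real.sqrt (6/π^3) * Real.sqrt ((t:ℝ)+1))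
        * (|Real.cos (αk k)| * (1 + C1s k / (t:ℝ))) := by
        refine mul_le_mul_of_nonneg_left hEle (by positivity)
    _ = ((24 * (k:ℝ) - 1) / 24) ^ t * Real.sqrt (6 / π ^ 3) * Real.sqrt ((t:ℝ) + 1) *
        |Real.cos (αk k)| * (1 + C1s k / (t:ℝ)) := by ring
end
end

section
/- For every integer n ≥ 1, the two series below converge and (1 − 1/(24n))·(1 − 1/μ(n))^{−1} = Σ_{t=0}^{∞} E_2(t)·n^{−t} + Σ_{t=0}^{∞} O_2(t)·n^{−t−1/2}. -/
open Real BigOperators Finset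

noncomputable section

section AuxGB

lemma ff_smeval (x : ℝ) (n : ℕ) : (descPochhammer ℤ n).smeval x = ff x n := by
  induction n with
  | zero => simp [ff, descPochhammer_zero, Polynomial.smeval_one]
  | succ n ih =>
    rw [descPochhammer_succ_right, Polynomial.smeval_mul, ih, ff]
    congr 1
    rw [Polynomial.smeval_sub, Polynomial.smeval_X, Polynomial.smeval_natCast]
    simp

lemma gbinom_eq_choose (x : ℝ) (n : ℕ) : gbinom x n = Ring.choose x n := by
  have h := Ring.descPochhammer_eq_factorial_smul_choose (R := ℝ) x n
  rw [ff_smeval, nsmul_eq_mul] at h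
  rw [gbinom, h]
  field_simp

lemma gbinom_pascal (x : ℝ) (k : ℕ) :
    gbinom (x + 1) (k + 1) = gbinom x k + gbinom x (k + 1) := by
  simp only [gbinom_eq_choose]; exact Ring.choose_succ_succ x k

lemma gbinom_vandermonde (x y : ℝ) (k : ℕ) :
    gbinom (x + y) k = ∑ j ∈ Finset.range (k + 1), gbinom x j * gbinom y (k - j) := by
  simp only [gbinom_eq_choose]
  rw [Ring.add_choose_eq k (Commute.all x y),
    Finset.Nat.sum_antidiagonal_eq_sum_range_succ_mk]

lemma gbinom_zero' (x : ℝ) : gbinom x 0 = 1 := by simp [gbinom, ff]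

lemma gbinom_one_eq_zero (k : ℕ) : gbinom (1 : ℝ) (k + 2) = 0 := by
  have h : ∀ m, ff (1 : ℝ) (m + 2) = 0 := by
    intro m
    induction m with
    | zero => norm_num [ff]
    | succ m ih => rw [ff, ih, zero_mul]
  simp [gbinom, h]

lemma abs_ff_half_le (j : ℕ) : |ff (1/2 : ℝ) j| ≤ (Nat.factorial j : ℝ) := by
  induction j with
  | zero => simp [ff]
  | succ j ih =>
    rw [ff, abs_mul, Nat.factorial_succ]
    push_cast
    have h2 : |(1/2 : ℝ) - j| ≤ (j : ℝ) + 1 := by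
      rw [abs_le]; constructor <;> [nlinarith [Nat.cast_nonneg (α := ℝ) j];
        nlinarith [Nat.cast_nonneg (α := ℝ) j]]
    calc |ff (1/2 : ℝ) j| * |(1/2 : ℝ) - j| ≤ (Nat.factorial j : ℝ) * ((j : ℝ) + 1) := by
          apply mul_le_mul ih h2 (abs_nonneg _) (Nat.cast_nonneg _)
      _ = ((j : ℝ) + 1) * (Nat.factorial j : ℝ) := by ring

lemma abs_gbinom_half_le (j : ℕ) : |gbinom (1/2 : ℝ) j| ≤ 1 := by
  rw [gbinom, abs_div, abs_of_nonneg (by positivity : (0:ℝ) ≤ (Nat.factorial j : ℝ))]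
  rw [div_le_one (by positivity)]
  exact abs_ff_half_le j

end AuxGB
section AuxRec

lemma s_rec (a : ℝ) (t : ℕ) :
    ∑ m ∈ Finset.range (t + 2), (-a) ^ m * gbinom (-(2 * (m : ℝ) + 1) / 2) (t + 1 - m)
      = gbinom (1/2) (t + 1)
        - (1 + a) * ∑ m ∈ Finset.range (t + 1), (-a) ^ m * gbinom (-(2 * (m : ℝ) + 1) / 2) (t - m) := by
  rw [Finset.sum_range_succ]
  have hlast : gbinom (-(2 * ((t + 1 : ℕ) : ℝ) + 1) / 2) (t + 1 - (t + 1)) = 1 := by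
    simp [gbinom_zero']
  rw [hlast, mul_one]
  have hsplit : ∀ m ∈ Finset.range (t + 1),
      (-a) ^ m * gbinom (-(2 * (m : ℝ) + 1) / 2) (t + 1 - m)
        = (-a) ^ m * gbinom (-(2 * (m : ℝ) + 1) / 2 + 1) (t + 1 - m)
          - (-a) ^ m * gbinom (-(2 * (m : ℝ) + 1) / 2) (t - m) := by
    intro m hm
    have hm' : m ≤ t := Nat.lt_succ_iff.mp (Finset.mem_range.mp hm)
    have h1 : t + 1 - m = (t - m) + 1 := by omega
    rw [h1, gbinom_pascal]; ring
  rw [Finset.sum_congr rfl hsplit, Finset.sum_sub_distrib]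
  have hT : ∑ m ∈ Finset.range (t + 1), (-a) ^ m * gbinom (-(2 * (m : ℝ) + 1) / 2 + 1) (t + 1 - m)
      = (∑ m ∈ Finset.range t, (-a) ^ (m + 1) * gbinom (-(2 * (m : ℝ) + 1) / 2) (t - m))
        + gbinom (1/2) (t + 1) := by
    rw [Finset.sum_range_succ']
    congr 1
    · apply Finset.sum_congr rfl
      intro m hm
      have h2 : t + 1 - (m + 1) = t - m := by omega
      rw [h2]
      congr 2
      push_cast
      ring
    · norm_num
  rw [hT]
  have hS : ∑ m ∈ Finset.range (t + 1), (-a) ^ m * gbinom (-(2 * (m : ℝ) + 1) / 2) (t - m)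
      = (∑ m ∈ Finset.range t, (-a) ^ m * gbinom (-(2 * (m : ℝ) + 1) / 2) (t - m)) + (-a) ^ t := by
    rw [Finset.sum_range_succ]
    simp [gbinom_zero']
  have hshift : ∑ m ∈ Finset.range t, (-a) ^ (m + 1) * gbinom (-(2 * (m : ℝ) + 1) / 2) (t - m)
      = (-a) * ∑ m ∈ Finset.range t, (-a) ^ m * gbinom (-(2 * (m : ℝ) + 1) / 2) (t - m) := by
    rw [Finset.mul_sum]
    apply Finset.sum_congr rfl
    intro m _
    ring
  rw [hshift, hS]
  ring

lemma s_closed (a x : ℝ) (t : ℕ) :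
    (-x) ^ t * ∑ m ∈ Finset.range (t + 1), (-a) ^ m * gbinom (-(2 * (m : ℝ) + 1) / 2) (t - m)
      = ∑ j ∈ Finset.range (t + 1), ((-x) ^ j * gbinom (1/2) j) * ((1 + a) * x) ^ (t - j) := by
  induction t with
  | zero => simp [gbinom_zero']
  | succ t ih =>
    rw [show t + 1 + 1 = t + 2 from rfl, s_rec]
    have hR : ∑ j ∈ Finset.range (t + 2), ((-x) ^ j * gbinom (1/2) j) * ((1 + a) * x) ^ (t + 1 - j)
        = ((1 + a) * x) * ∑ j ∈ Finset.range (t + 1), ((-x) ^ j * gbinom (1/2) j) * ((1 + a) * x) ^ (t - j)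
          + (-x) ^ (t + 1) * gbinom (1/2) (t + 1) := by
      rw [Finset.sum_range_succ, Nat.sub_self, pow_zero, mul_one, Finset.mul_sum]
      congr 1
      apply Finset.sum_congr rfl
      intro j hj
      have hj' : j ≤ t := Nat.lt_succ_iff.mp (Finset.mem_range.mp hj)
      have h1 : t + 1 - j = (t - j) + 1 := by omega
      rw [h1, pow_succ]
      ring
    rw [hR, ← ih]
    ring
end AuxRec
section AuxSeries

/-- auxiliary: the sequence of the binomial series for `√(1-x)`. -/
def wfun (x : ℝ) (j : ℕ) : ℝ := (-x) ^ j * gbinom (1/2) j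

/-- auxiliary: Cauchy product of `wfun` with a geometric sequence. -/
def ufun (a x : ℝ) (t : ℕ) : ℝ :=
  ∑ j ∈ Finset.range (t + 1), wfun x j * ((1 + a) * x) ^ (t - j)

lemma s_closed' (a x : ℝ) (t : ℕ) :
    (-x) ^ t * ∑ m ∈ Finset.range (t + 1), (-a) ^ m * gbinom (-(2 * (m : ℝ) + 1) / 2) (t - m)
      = ufun a x t := s_closed a x t

lemma wfun_norm {x : ℝ} (hx : |x| ≤ 1/24) (j : ℕ) : ‖wfun x j‖ ≤ (1/24 : ℝ) ^ j := by
  rw [wfun, Real.norm_eq_abs, abs_mul, abs_pow, abs_neg]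
  calc |x| ^ j * |gbinom (1/2) j| ≤ (1/24 : ℝ) ^ j * 1 := by
        apply mul_le_mul (pow_le_pow_left₀ (abs_nonneg x) hx j) (abs_gbinom_half_le j)
          (abs_nonneg _) (by positivity)
    _ = (1/24 : ℝ) ^ j := mul_one _

lemma wfun_summable_norm {x : ℝ} (hx : |x| ≤ 1/24) :
    Summable (fun j => ‖wfun x j‖) := by
  apply Summable.of_nonneg_of_le (fun j => norm_nonneg _) (wfun_norm hx)
  exact summable_geometric_of_lt_one (by norm_num) (by norm_num)

lemma tsum_wfun {x : ℝ} (hx0 : 0 ≤ x) (hx : x ≤ 1/24) :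
    ∑' j, wfun x j = Real.sqrt (1 - x) := by
  have hxabs : |x| ≤ 1/24 := by rw [abs_of_nonneg hx0]; exact hx
  have hws := wfun_summable_norm hxabs
  have hwsum : Summable (wfun x) := hws.of_norm
  -- square of the sum
  have hcauchy := tsum_mul_tsum_eq_tsum_sum_range_of_summable_norm hws hws
  have hinner : ∀ t, (∑ j ∈ Finset.range (t + 1), wfun x j * wfun x (t - j))
      = (-x) ^ t * gbinom 1 t := by
    intro t
    have h1 : ∑ j ∈ Finset.range (t + 1), wfun x j * wfun x (t - j)
        = ∑ j ∈ Finset.range (t + 1), (-x) ^ t * (gbinom (1/2) j * gbinom (1/2) (t - j)) := by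
      apply Finset.sum_congr rfl
      intro j hj
      have hj' : j ≤ t := Nat.lt_succ_iff.mp (Finset.mem_range.mp hj)
      rw [wfun, wfun]
      have hpw : (-x) ^ j * (-x) ^ (t - j) = (-x) ^ t := by
        rw [← pow_add]; congr 1; omega
      rw [← hpw]; ring
    rw [h1, ← Finset.mul_sum]
    congr 1
    have hv := gbinom_vandermonde (1/2) (1/2) t
    rw [show (1/2 + 1/2 : ℝ) = 1 by norm_num] at hv
    rw [← hv]
  have hsq : (∑' j, wfun x j) * (∑' j, wfun x j) = 1 - x := by
    rw [hcauchy]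
    have heq : (fun t => ∑ j ∈ Finset.range (t + 1), wfun x j * wfun x (t - j))
        = fun t => (-x) ^ t * gbinom 1 t := funext hinner
    rw [heq]
    have hfin : ∀ t ∉ ({0, 1} : Finset ℕ), (-x) ^ t * gbinom (1 : ℝ) t = 0 := by
      intro t ht
      match t with
      | 0 => simp at ht
      | 1 => simp at ht
      | (k+2) => rw [gbinom_one_eq_zero]; ring
    rw [tsum_eq_sum hfin]
    norm_num [gbinom, ff]
    try ring
  have hbound : |∑' j, wfun x (j + 1)| ≤ 1/23 := by
    have hs1 : Summable (fun j => ‖wfun x (j + 1)‖) := by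
      exact (summable_nat_add_iff 1).mpr hws
    calc |∑' j, wfun x (j + 1)| ≤ ∑' j, ‖wfun x (j + 1)‖ := by
          exact norm_tsum_le_tsum_norm hs1
      _ ≤ ∑' j : ℕ, (1/24 : ℝ) ^ (j + 1) := by
          have hgeo24 : Summable (fun j : ℕ => (1/24 : ℝ) ^ (j + 1)) :=
            (summable_nat_add_iff 1).mpr
              (summable_geometric_of_lt_one (by norm_num) (by norm_num))
          exact Summable.tsum_le_tsum (fun j => wfun_norm hxabs (j + 1)) hs1 hgeo24
      _ = 1/23 := by
          have : ∀ j : ℕ, (1/24 : ℝ) ^ (j + 1) = (1/24) * (1/24 : ℝ) ^ j := by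
            intro j; rw [pow_succ]; ring
          rw [tsum_congr this, tsum_mul_left,
            tsum_geometric_of_lt_one (by norm_num) (by norm_num)]
          norm_num
  have hzero : ∑' j, wfun x j = wfun x 0 + ∑' j, wfun x (j + 1) :=
    Summable.tsum_eq_zero_add hwsum
  have hw0 : wfun x 0 = 1 := by norm_num [wfun, gbinom, ff]
  have hWpos : 0 < ∑' j, wfun x j := by
    rw [hzero, hw0]
    have := abs_le.mp hbound
    linarith
  have h2 : Real.sqrt (1 - x) ^ 2 = 1 - x := Real.sq_sqrt (by linarith)
  have hface : (∑' j, wfun x j - Real.sqrt (1 - x)) * (∑' j, wfun x j + Real.sqrt (1 - x)) = 0 := by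
    linear_combination hsq - h2
  rcases mul_eq_zero.mp hface with h | h
  · linarith [sub_eq_zero.mp h]
  · have := Real.sqrt_nonneg (1 - x)
    linarith

lemma ufun_summable {a x : ℝ} (hxabs : |x| ≤ 1/24) (hq0 : 0 ≤ (1 + a) * x)
    (hq1 : (1 + a) * x < 1) : Summable (ufun a x) := by
  have hgs : Summable (fun k => ‖((1 + a) * x) ^ k‖) := by
    simp only [norm_pow, Real.norm_eq_abs, abs_of_nonneg hq0]
    exact summable_geometric_of_lt_one hq0 hq1
  exact (summable_norm_sum_mul_range_of_summable_norm (wfun_summable_norm hxabs) hgs).of_norm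

lemma tsum_ufun {a x : ℝ} (hx0 : 0 ≤ x) (hx : x ≤ 1/24) (hq0 : 0 ≤ (1 + a) * x)
    (hq1 : (1 + a) * x < 1) :
    ∑' t, ufun a x t = Real.sqrt (1 - x) * (1 - (1 + a) * x)⁻¹ := by
  have hxabs : |x| ≤ 1/24 := by rw [abs_of_nonneg hx0]; exact hx
  have hgs : Summable (fun k => ‖((1 + a) * x) ^ k‖) := by
    simp only [norm_pow, Real.norm_eq_abs, abs_of_nonneg hq0]
    exact summable_geometric_of_lt_one hq0 hq1
  have h := tsum_mul_tsum_eq_tsum_sum_range_of_summable_norm (wfun_summable_norm hxabs) hgs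
  rw [tsum_wfun hx0 hx, tsum_geometric_of_lt_one hq0 hq1] at h
  exact h.symm

end AuxSeries
set_option maxHeartbeats 2000000 in
/-- expansion of `(1 − 1/(24n))·(1 − 1/μ(n))⁻¹`. -/
theorem T2_expansion (n : ℕ) (hn : 1 ≤ n) :
    Summable (fun t : ℕ => E2 t * (n : ℝ) ^ (-(t : ℝ))) ∧
    Summable (fun t : ℕ => O2 t * (n : ℝ) ^ (-(t : ℝ) - 1 / 2)) ∧
    (1 - 1 / (24 * (n : ℝ))) * (1 - 1 / μ n)⁻¹ =
      (∑' t : ℕ, E2 t * (n : ℝ) ^ (-(t : ℝ))) +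
        ∑' t : ℕ, O2 t * (n : ℝ) ^ (-(t : ℝ) - 1 / 2) := by
  have hN1 : (1 : ℝ) ≤ (n : ℝ) := by exact_mod_cast hn
  have hN0 : (0 : ℝ) < (n : ℝ) := by linarith
  have hNne : (n : ℝ) ≠ 0 := hN0.ne'
  have hπ : (3 : ℝ) < π := Real.pi_gt_three
  have hπ0 : (0 : ℝ) < π := by linarith
  have hπ2 : (9 : ℝ) < π ^ 2 := by nlinarith
  have hαc2 : αc ^ 2 = π ^ 2 / 36 := by rw [αc]; ring
  have ha_eq : (αc ^ 2)⁻¹ = 36 / π ^ 2 := by rw [hαc2]; rw [inv_div]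
  have ha0 : (0 : ℝ) < (αc ^ 2)⁻¹ := by rw [ha_eq]; positivity
  have ha4 : (αc ^ 2)⁻¹ < 4 := by
    rw [ha_eq, div_lt_iff₀ (by positivity)]; nlinarith
  have hx0 : (0 : ℝ) < (24 * (n : ℝ))⁻¹ := by positivity
  have hx24 : (24 * (n : ℝ))⁻¹ ≤ 1 / 24 := by
    rw [inv_le_comm₀ (by positivity) (by norm_num)]; rw [one_div, inv_inv]; linarith
  have hxabs : |(24 * (n : ℝ))⁻¹| ≤ 1 / 24 := by rw [abs_of_pos hx0]; exact hx24
  have hq0 : (0 : ℝ) ≤ (1 + (αc ^ 2)⁻¹) * (24 * (n : ℝ))⁻¹ := by positivity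
  have hq1 : (1 + (αc ^ 2)⁻¹) * (24 * (n : ℝ))⁻¹ < 1 := by nlinarith
  -- odd series: o2 in terms of ufun
  have hpu : ∀ t : ℕ, o2 t * (n : ℝ) ^ (-(t : ℝ) - 1 / 2)
      = (6 / (π * Real.sqrt 24) / Real.sqrt (n : ℝ)) * ufun ((αc ^ 2)⁻¹) ((24 * (n : ℝ))⁻¹) t := by
    intro t
    rw [← s_closed']
    rw [o2]
    have hr2 : (n : ℝ) ^ (-(t : ℝ) - 1 / 2) = (((n : ℝ))⁻¹) ^ t / Real.sqrt (n : ℝ) := by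
      rw [Real.rpow_sub hN0, Real.rpow_neg hN0.le, Real.rpow_natCast, inv_pow,
        ← Real.sqrt_eq_rpow]
    rw [hr2]
    have hmx : ((-1 : ℝ) / 24) ^ t * ((n : ℝ)⁻¹) ^ t = (-(24 * (n : ℝ))⁻¹) ^ t := by
      rw [← mul_pow]; congr 1; rw [mul_inv]; ring
    calc 6 / (π * Real.sqrt 24) * (-1 / 24) ^ t *
          (∑ m ∈ Finset.range (t + 1),
            (-(αc ^ 2)⁻¹) ^ m * gbinom (-(2 * (m : ℝ) + 1) / 2) (t - m)) *
          (((n : ℝ))⁻¹ ^ t / Real.sqrt (n : ℝ))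
        = (6 / (π * Real.sqrt 24) / Real.sqrt (n : ℝ)) * (((-1 : ℝ) / 24) ^ t * ((n : ℝ)⁻¹) ^ t *
            ∑ m ∈ Finset.range (t + 1),
              (-(αc ^ 2)⁻¹) ^ m * gbinom (-(2 * (m : ℝ) + 1) / 2) (t - m)) := by ring
      _ = (6 / (π * Real.sqrt 24) / Real.sqrt (n : ℝ)) * ((-(24 * (n : ℝ))⁻¹) ^ t *
            ∑ m ∈ Finset.range (t + 1),
              (-(αc ^ 2)⁻¹) ^ m * gbinom (-(2 * (m : ℝ) + 1) / 2) (t - m)) := by rw [hmx]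
  have hSu := ufun_summable (a := (αc ^ 2)⁻¹) hxabs hq0 hq1
  have hSp : Summable (fun t : ℕ => o2 t * (n : ℝ) ^ (-(t : ℝ) - 1 / 2)) :=
    (hSu.mul_left _).congr (fun t => (hpu t).symm)
  have hPval : ∑' t : ℕ, o2 t * (n : ℝ) ^ (-(t : ℝ) - 1 / 2)
      = (6 / (π * Real.sqrt 24) / Real.sqrt (n : ℝ)) *
        (Real.sqrt (1 - (24 * (n : ℝ))⁻¹) * (1 - (1 + (αc ^ 2)⁻¹) * (24 * (n : ℝ))⁻¹)⁻¹) := by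
    rw [tsum_congr hpu, tsum_mul_left, tsum_ufun hx0.le hx24 hq0 hq1]
  -- O2 series equals p - x * (shift of p)
  have hO2p : ∀ t : ℕ, O2 t * (n : ℝ) ^ (-(t : ℝ) - 1 / 2)
      = o2 t * (n : ℝ) ^ (-(t : ℝ) - 1 / 2)
        - (24 * (n : ℝ))⁻¹ * (if t = 0 then 0
            else o2 (t - 1) * (n : ℝ) ^ (-((t - 1 : ℕ) : ℝ) - 1 / 2)) := by
    intro t
    match t with
    | 0 => simp [O2]
    | (t + 1) =>
      rw [O2]
      simp only [Nat.add_sub_cancel, if_neg (Nat.succ_ne_zero t)]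
      have hstep : (n : ℝ) ^ (-((t + 1 : ℕ) : ℝ) - 1 / 2)
          = (n : ℝ)⁻¹ * (n : ℝ) ^ (-((t : ℕ) : ℝ) - 1 / 2) := by
        rw [← Real.rpow_neg_one (n : ℝ), ← Real.rpow_add hN0]
        congr 1
        push_cast
        ring
      rw [hstep]
      field_simp
  have hpe1 : ∀ t : ℕ, (if (t + 1 : ℕ) = 0 then (0:ℝ)
      else o2 ((t + 1) - 1) * (n : ℝ) ^ (-(((t + 1 : ℕ) - 1 : ℕ) : ℝ) - 1 / 2))
      = o2 t * (n : ℝ) ^ (-(t : ℝ) - 1 / 2) := by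
    intro t
    simp only [Nat.add_sub_cancel, if_neg (Nat.succ_ne_zero t)]
  have hSpe : Summable (fun t : ℕ => (if t = 0 then (0:ℝ)
      else o2 (t - 1) * (n : ℝ) ^ (-((t - 1 : ℕ) : ℝ) - 1 / 2))) := by
    apply (summable_nat_add_iff 1).mp
    exact hSp.congr (fun t => (hpe1 t).symm)
  have hpeval : ∑' t : ℕ, (if t = 0 then (0:ℝ)
      else o2 (t - 1) * (n : ℝ) ^ (-((t - 1 : ℕ) : ℝ) - 1 / 2))
      = ∑' t : ℕ, o2 t * (n : ℝ) ^ (-(t : ℝ) - 1 / 2) := by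
    rw [Summable.tsum_eq_zero_add hSpe, if_pos rfl, zero_add]
    exact tsum_congr hpe1
  have hSO2 : Summable (fun t : ℕ => O2 t * (n : ℝ) ^ (-(t : ℝ) - 1 / 2)) :=
    (hSp.sub (hSpe.mul_left _)).congr (fun t => (hO2p t).symm)
  have hO2val : ∑' t : ℕ, O2 t * (n : ℝ) ^ (-(t : ℝ) - 1 / 2)
      = (1 - (24 * (n : ℝ))⁻¹) * ∑' t : ℕ, o2 t * (n : ℝ) ^ (-(t : ℝ) - 1 / 2) := by
    rw [tsum_congr hO2p, Summable.tsum_sub hSp (hSpe.mul_left _), tsum_mul_left, hpeval]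
    ring
  -- even series
  have hEy : ∀ t : ℕ, (n : ℝ) ^ (-(t : ℝ)) = ((n : ℝ)⁻¹) ^ t := fun t => by
    rw [Real.rpow_neg hN0.le, Real.rpow_natCast, inv_pow]
  have hrne : ((1 + (αc ^ 2)⁻¹) / 24 : ℝ) ≠ 0 := by positivity
  have hry1 : ((1 + (αc ^ 2)⁻¹) / 24) * (n : ℝ)⁻¹ < 1 := by
    have hinv1 : (n : ℝ)⁻¹ ≤ 1 := by
      rw [inv_le_one_iff₀]; right; exact hN1
    nlinarith [hx0, inv_pos.mpr hN0]
  have hry0 : (0:ℝ) ≤ ((1 + (αc ^ 2)⁻¹) / 24) * (n : ℝ)⁻¹ := by positivity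
  have hSF : Summable (fun t : ℕ =>
      (54 / (π ^ 4 * (1 + (αc ^ 2)⁻¹)) / ((1 + (αc ^ 2)⁻¹) / 24)) *
        (((1 + (αc ^ 2)⁻¹) / 24) * (n : ℝ)⁻¹) ^ t) :=
    (summable_geometric_of_lt_one hry0 hry1).mul_left _
  have hd0 : ∀ t ∉ ({0, 1} : Finset ℕ),
      (fun t : ℕ => E2 t * ((n : ℝ)⁻¹) ^ t
        - (54 / (π ^ 4 * (1 + (αc ^ 2)⁻¹)) / ((1 + (αc ^ 2)⁻¹) / 24)) *
          (((1 + (αc ^ 2)⁻¹) / 24) * (n : ℝ)⁻¹) ^ t) t = 0 := by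
    intro t ht
    match t with
    | 0 => simp at ht
    | 1 => simp at ht
    | (t + 2) =>
      simp only [E2, if_neg (by omega : ¬ t + 2 = 0), if_neg (by omega : ¬ t + 2 = 1),
        Nat.add_sub_cancel, show t + 2 - 1 = t + 1 from rfl]
      rw [mul_pow, show t + 2 = (t + 1) + 1 from rfl, pow_succ ((1 + (αc ^ 2)⁻¹) / 24) (t + 1)]
      field_simp
      ring
  have hSd : Summable (fun t : ℕ => E2 t * ((n : ℝ)⁻¹) ^ t
      - (54 / (π ^ 4 * (1 + (αc ^ 2)⁻¹)) / ((1 + (αc ^ 2)⁻¹) / 24)) *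
        (((1 + (αc ^ 2)⁻¹) / 24) * (n : ℝ)⁻¹) ^ t) :=
    summable_of_ne_finset_zero hd0
  have hSE' : Summable (fun t : ℕ => E2 t * ((n : ℝ)⁻¹) ^ t) :=
    (hSd.add hSF).congr (fun t => by ring)
  have hSE : Summable (fun t : ℕ => E2 t * (n : ℝ) ^ (-(t : ℝ))) :=
    hSE'.congr (fun t => by rw [hEy t])
  have hEval : ∑' t : ℕ, E2 t * (n : ℝ) ^ (-(t : ℝ))
      = ((1 - (54 / (π ^ 4 * (1 + (αc ^ 2)⁻¹)) / ((1 + (αc ^ 2)⁻¹) / 24)))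
          + ((36 - π ^ 2) / (24 * π ^ 2) * (n : ℝ)⁻¹
            - (54 / (π ^ 4 * (1 + (αc ^ 2)⁻¹)) / ((1 + (αc ^ 2)⁻¹) / 24)) *
              (((1 + (αc ^ 2)⁻¹) / 24) * (n : ℝ)⁻¹)))
        + (54 / (π ^ 4 * (1 + (αc ^ 2)⁻¹)) / ((1 + (αc ^ 2)⁻¹) / 24)) *
            (1 - ((1 + (αc ^ 2)⁻¹) / 24) * (n : ℝ)⁻¹)⁻¹ := by
    rw [tsum_congr (fun t => hEy t ▸ rfl : ∀ t : ℕ, E2 t * (n : ℝ) ^ (-(t : ℝ)) = E2 t * ((n : ℝ)⁻¹) ^ t)]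
    rw [show (fun t : ℕ => E2 t * ((n : ℝ)⁻¹) ^ t) = (fun t : ℕ => (E2 t * ((n : ℝ)⁻¹) ^ t
      - (54 / (π ^ 4 * (1 + (αc ^ 2)⁻¹)) / ((1 + (αc ^ 2)⁻¹) / 24)) *
        (((1 + (αc ^ 2)⁻¹) / 24) * (n : ℝ)⁻¹) ^ t)
      + (54 / (π ^ 4 * (1 + (αc ^ 2)⁻¹)) / ((1 + (αc ^ 2)⁻¹) / 24)) *
        (((1 + (αc ^ 2)⁻¹) / 24) * (n : ℝ)⁻¹) ^ t) from funext fun t => by ring]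
    rw [Summable.tsum_add hSd hSF, tsum_eq_sum hd0, tsum_mul_left,
      tsum_geometric_of_lt_one hry0 hry1]
    rw [Finset.sum_pair (by norm_num : (0:ℕ) ≠ 1)]
    norm_num [E2]
  -- μ facts
  have h24N1 : (0:ℝ) ≤ 24 * (n:ℝ) - 1 := by linarith
  have hs1sq : Real.sqrt (24 * (n:ℝ) - 1) ^ 2 = 24 * (n:ℝ) - 1 := Real.sq_sqrt h24N1
  have hs1ge : (4:ℝ) ≤ Real.sqrt (24 * (n:ℝ) - 1) := by
    have h16 : (4:ℝ) = Real.sqrt 16 := by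
      rw [show (16:ℝ) = 4 ^ 2 by norm_num, Real.sqrt_sq (by norm_num : (0:ℝ) ≤ 4)]
    rw [h16]
    exact Real.sqrt_le_sqrt (by linarith)
  have hμdef : μ n = π / 6 * Real.sqrt (24 * (n:ℝ) - 1) := rfl
  have hμ1 : 1 < μ n := by rw [hμdef]; nlinarith
  have hμ0 : (0:ℝ) < μ n := by linarith
  have hμsq : μ n ^ 2 = π ^ 2 * (24 * (n:ℝ) - 1) / 36 := by
    rw [hμdef, mul_pow, div_pow, hs1sq]; ring
  have hμsq1 : 1 < μ n ^ 2 := by nlinarith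
  have hB : π ^ 2 * (24 * (n:ℝ) - 1) / 36 - 1 ≠ 0 := by
    rw [← hμsq]; exact (sub_pos.mpr hμsq1).ne'
  have hA : 1 - (1 + 36 / π ^ 2) * (24 * (n:ℝ))⁻¹ ≠ 0 := by
    have := hq1; rw [ha_eq] at this; exact (sub_pos.mpr this).ne'
  have hb0 : (0:ℝ) < 1 + 36 / π ^ 2 := by positivity
  have hden : (0:ℝ) < 24 * π ^ 2 * (n:ℝ) - π ^ 2 - 36 := by nlinarith
  have h3 : 1 - (1 + 36 / π ^ 2) / 24 * (n : ℝ)⁻¹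
      = (24 * π ^ 2 * (n:ℝ) - π ^ 2 - 36) / (24 * π ^ 2 * (n:ℝ)) := by
    field_simp
    ring
  have h4 : 1 - (1 + 36 / π ^ 2) * (24 * (n:ℝ))⁻¹
      = (24 * π ^ 2 * (n:ℝ) - π ^ 2 - 36) / (24 * π ^ 2 * (n:ℝ)) := by
    field_simp
    ring
  have hB' : π ^ 2 * (24 * (n:ℝ) - 1) / 36 - 1
      = (24 * π ^ 2 * (n:ℝ) - π ^ 2 - 36) / 36 := by ring
  -- even closed form
  have hEclosed : ∑' t : ℕ, E2 t * (n : ℝ) ^ (-(t : ℝ))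
      = (1 - (24 * (n:ℝ))⁻¹) * (μ n ^ 2 / (μ n ^ 2 - 1)) := by
    rw [hEval, hμsq, ha_eq, h3, hB']
    field_simp [hden.ne', ne_of_gt (by linarith : (0:ℝ) < π ^ 2 * (24 * (n:ℝ) - 1) - 36)]
    ring
  -- odd closed form
  have hsqrt24 : Real.sqrt 24 ^ 2 = 24 := Real.sq_sqrt (by norm_num)
  have hsqrtN : Real.sqrt (n:ℝ) ^ 2 = (n:ℝ) := Real.sq_sqrt hN0.le
  have hs24pos : (0:ℝ) < Real.sqrt 24 := Real.sqrt_pos.mpr (by norm_num)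
  have hsNpos : (0:ℝ) < Real.sqrt (n:ℝ) := Real.sqrt_pos.mpr hN0
  have h1mx : 1 - (24 * (n:ℝ))⁻¹ = (24 * (n:ℝ) - 1) / (24 * (n:ℝ)) := by field_simp
  have hsqrt1mx : Real.sqrt (1 - (24 * (n:ℝ))⁻¹)
      = Real.sqrt (24 * (n:ℝ) - 1) / (Real.sqrt 24 * Real.sqrt (n:ℝ)) := by
    rw [h1mx, Real.sqrt_div h24N1, Real.sqrt_mul (by norm_num : (0:ℝ) ≤ 24)]
  have hOclosed : ∑' t : ℕ, O2 t * (n : ℝ) ^ (-(t:ℝ) - 1/2)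
      = (1 - (24 * (n:ℝ))⁻¹) * (μ n / (μ n ^ 2 - 1)) := by
    rw [hO2val, hPval, hsqrt1mx, ha_eq, hμsq, hμdef, h4, hB']
    congr 1
    field_simp
    ring_nf
    rw [hsqrt24, hsqrtN]
    ring
  refine ⟨hSE, hSO2, ?_⟩
  rw [hEclosed, hOclosed]
  have hμne1 : μ n - 1 ≠ 0 := (sub_pos.mpr hμ1).ne'
  have hμsqne : μ n ^ 2 - 1 ≠ 0 := (sub_pos.mpr hμsq1).ne'
  have hd : 1 - 1 / μ n ≠ 0 := by
    rw [sub_ne_zero]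
    intro h
    rw [eq_comm, div_eq_one_iff_eq hμ0.ne'] at h
    exact hμ1.ne' h.symm
  field_simp
  ring
end
end

section
/- For every integer t ≥ 2: |S_5(t) − cosh(α)/(2√π·t^{3/2})| ≤ 1.2·cosh(α)/(2√π·t^{5/2}), where S_5(t) := (−1)^{t−1}·(3/2−t)_t·Σ_{u=0}^{t−1} (−1)^u·(−t+1)_u·α^{2u}/((t+u)!·(2u)!). -/
open Real BigOperators Finset

noncomputable section

/-- `S_5(t)`. -/
def S5 (t : ℕ) : ℝ :=
  (-1 : ℝ) ^ (t - 1) * rf (3 / 2 - (t : ℝ)) t *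
    ∑ u ∈ Finset.range t,
      (-1 : ℝ) ^ u * rf (-(t : ℝ) + 1) u * αc ^ (2 * u) /
        ((Nat.factorial (t + u) : ℝ) * (Nat.factorial (2 * u) : ℝ))

/-! ### Auxiliary machinery for `S5_estimate` -/

section Aux

lemma rf_succ_left (a : ℝ) : ∀ m : ℕ, rf a (m + 1) = a * rf (a + 1) m
  | 0 => by simp [rf]
  | m + 1 => by
    rw [show rf a (m + 1 + 1) = rf a (m + 1) * (a + (m + 1 : ℕ)) from rfl,
      rf_succ_left a m,
      show rf (a + 1) (m + 1) = rf (a + 1) m * ((a + 1) + (m : ℕ)) from rfl]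
    push_cast
    ring

lemma rf_L1 (s : ℕ) : (-1 : ℝ) ^ s * rf (3 / 2 - ((s : ℝ) + 1)) (s + 1)
    = (Nat.factorial (2 * s) : ℝ) / (2 * 4 ^ s * Nat.factorial s) := by
  induction s with
  | zero => simp [rf]; norm_num
  | succ n ih =>
    have harg : (3 / 2 - (((n : ℝ) + 1) + 1)) + 1 = 3 / 2 - ((n : ℝ) + 1) := by ring
    rw [show ((n + 1 : ℕ) : ℝ) = (n : ℝ) + 1 by push_cast; ring]
    rw [rf_succ_left, harg]
    have hfn : ((Nat.factorial n : ℝ)) ≠ 0 := Nat.cast_ne_zero.mpr (Nat.factorial_ne_zero _)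
    have h4 : ((4 : ℝ)) ^ n ≠ 0 := by positivity
    have hf1 : (Nat.factorial (2 * (n + 1)) : ℝ)
        = (2 * (n : ℝ) + 2) * ((2 * (n : ℝ) + 1) * Nat.factorial (2 * n)) := by
      rw [show 2 * (n + 1) = (2 * n + 1) + 1 by omega, Nat.factorial_succ,
        Nat.factorial_succ]
      push_cast
      ring
    have hf2 : (Nat.factorial (n + 1) : ℝ) = ((n : ℝ) + 1) * Nat.factorial n := by
      rw [Nat.factorial_succ]; push_cast; ring
    rw [hf1, hf2, pow_succ, pow_succ]
    have lhs_eq : (-1 : ℝ) ^ n * (-1) * ((3 / 2 - ((n : ℝ) + 1 + 1)) * rf (3 / 2 - ((n : ℝ) + 1)) (n + 1))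
        = ((n : ℝ) + 1 / 2) * ((-1 : ℝ) ^ n * rf (3 / 2 - ((n : ℝ) + 1)) (n + 1)) := by ring
    rw [lhs_eq, ih]
    field_simp
    ring

lemma rf_L2 (s : ℕ) : ∀ u : ℕ, u ≤ s → (-1 : ℝ) ^ u * rf (-(s : ℝ)) u
    = (Nat.factorial s : ℝ) / (Nat.factorial (s - u)) := by
  intro u
  induction u with
  | zero =>
    intro _
    simp [rf]
    exact (div_self (Nat.cast_ne_zero.mpr (Nat.factorial_ne_zero s))).symm
  | succ k ih =>
    intro hk
    have hks : k ≤ s := by omega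
    rw [show rf (-(s : ℝ)) (k + 1) = rf (-(s : ℝ)) k * (-(s : ℝ) + (k : ℕ)) from rfl]
    have lhs_eq : (-1 : ℝ) ^ (k + 1) * (rf (-(s : ℝ)) k * (-(s : ℝ) + (k : ℕ)))
        = ((s : ℝ) - k) * ((-1 : ℝ) ^ k * rf (-(s : ℝ)) k) := by push_cast; ring
    rw [lhs_eq, ih hks]
    have h2 : s - k = (s - (k + 1)) + 1 := by omega
    rw [h2, Nat.factorial_succ]
    have h3 : ((s - (k + 1) : ℕ) : ℝ) = (s : ℝ) - (k : ℝ) - 1 := by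
      have h := Nat.cast_sub (R := ℝ) hk
      push_cast at h ⊢
      rw [h]; ring
    have hd1 : ((Nat.factorial (s - (k + 1)) : ℝ)) ≠ 0 :=
      Nat.cast_ne_zero.mpr (Nat.factorial_ne_zero _)
    have hd2 : ((s : ℝ)) - k > 0 := by
      have : (k : ℝ) < s := by exact_mod_cast Nat.lt_of_lt_of_le (Nat.lt_succ_self k) hk
      linarith
    push_cast [h3]
    field_simp
    ring_nf
    rw [← sub_mul, mul_inv_cancel₀ hd2.ne']

/-- Central binomial ratio `(2s)! / (4^s s! s!)`. -/
def Bc (s : ℕ) : ℝ := (Nat.factorial (2 * s) : ℝ) / (4 ^ s * Nat.factorial s * Nat.factorial s)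

lemma Bc_pos (s : ℕ) : 0 < Bc s := by
  unfold Bc
  have h1 : (0 : ℝ) < Nat.factorial (2 * s) := by exact_mod_cast Nat.factorial_pos _
  have h2 : (0 : ℝ) < Nat.factorial s := by exact_mod_cast Nat.factorial_pos _
  positivity

lemma Bc_sq_W (s : ℕ) : Bc s ^ 2 * (2 * (s : ℝ) + 1) * Real.Wallis.W s = 1 := by
  rw [Real.Wallis.W_eq_factorial_ratio]
  unfold Bc
  have h2 : ((Nat.factorial s : ℝ)) ≠ 0 := Nat.cast_ne_zero.mpr (Nat.factorial_ne_zero _)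
  have h3 : ((Nat.factorial (2 * s) : ℝ)) ≠ 0 := Nat.cast_ne_zero.mpr (Nat.factorial_ne_zero _)
  have h4 : ((4 : ℝ)) ^ s ≠ 0 := by positivity
  have h5 : (2 : ℝ) * s + 1 ≠ 0 := by positivity
  have h16 : ((2 : ℝ)) ^ (4 * s) = (4 ^ s) ^ 2 := by
    rw [show (4 : ℝ) = 2 ^ 2 by norm_num, ← pow_mul, ← pow_mul]
    ring_nf
  field_simp
  rw [h16]

lemma Bc_lower (s : ℕ) : 1 / Real.sqrt (π * ((s : ℝ) + 1)) ≤ Bc s := by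
  have hW := Real.Wallis.W_le s
  have hWp := Real.Wallis.W_pos s
  have hsq := Bc_sq_W s
  have hp := Real.pi_pos
  have hB := Bc_pos s
  have h1 : 1 / (π * ((s : ℝ) + 1)) ≤ Bc s ^ 2 := by
    rw [div_le_iff₀ (by positivity)]
    have key : Bc s ^ 2 * (2 * (s : ℝ) + 1) * Real.Wallis.W s
        ≤ Bc s ^ 2 * (2 * (s : ℝ) + 1) * (π / 2) := by
      apply mul_le_mul_of_nonneg_left hW
      positivity
    nlinarith [sq_nonneg (Bc s)]
  calc 1 / Real.sqrt (π * ((s : ℝ) + 1)) = Real.sqrt (1 / (π * ((s : ℝ) + 1))) := by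
        rw [one_div, one_div, Real.sqrt_inv]
    _ ≤ Real.sqrt (Bc s ^ 2) := Real.sqrt_le_sqrt h1
    _ = Bc s := Real.sqrt_sq hB.le

lemma Bc_upper (s : ℕ) (hs : 1 ≤ s) : Bc s ≤ 1 / Real.sqrt (π * (s : ℝ)) := by
  have hW := Real.Wallis.le_W s
  have hWp := Real.Wallis.W_pos s
  have hsq := Bc_sq_W s
  have hp := Real.pi_pos
  have hB := Bc_pos s
  have hs1 : (1 : ℝ) ≤ (s : ℝ) := by exact_mod_cast hs
  have h1 : Bc s ^ 2 ≤ 1 / (π * (s : ℝ)) := by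
    rw [le_div_iff₀ (by positivity)]
    have key : Bc s ^ 2 * (2 * (s : ℝ) + 1) * ((2 * (s : ℝ) + 1) / (2 * (s : ℝ) + 2) * (π / 2))
        ≤ Bc s ^ 2 * (2 * (s : ℝ) + 1) * Real.Wallis.W s := by
      apply mul_le_mul_of_nonneg_left hW
      positivity
    rw [hsq] at key
    have expand : Bc s ^ 2 * (2 * (s : ℝ) + 1) * ((2 * (s : ℝ) + 1) / (2 * (s : ℝ) + 2) * (π / 2))
        = Bc s ^ 2 * π * ((2 * (s : ℝ) + 1) ^ 2 / (2 * (2 * (s : ℝ) + 2))) := by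
      field_simp
    rw [expand] at key
    have hfrac : (s : ℝ) ≤ (2 * (s : ℝ) + 1) ^ 2 / (2 * (2 * (s : ℝ) + 2)) := by
      rw [le_div_iff₀ (by positivity)]
      nlinarith
    nlinarith [sq_nonneg (Bc s), mul_nonneg (sq_nonneg (Bc s)) hp.le]
  calc Bc s = Real.sqrt (Bc s ^ 2) := (Real.sqrt_sq hB.le).symm
    _ ≤ Real.sqrt (1 / (π * (s : ℝ))) := Real.sqrt_le_sqrt h1
    _ = 1 / Real.sqrt (π * (s : ℝ)) := by rw [one_div, one_div, Real.sqrt_inv]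

end Aux


section Aux2

/-- The ratio `s! (s+1)! / ((s-u)! (s+1+u)!)`. -/
def Rc (s u : ℕ) : ℝ :=
  (Nat.factorial s : ℝ) * Nat.factorial (s + 1) /
    (Nat.factorial (s - u) * Nat.factorial (s + 1 + u))

lemma Rc_nonneg (s u : ℕ) : 0 ≤ Rc s u := by unfold Rc; positivity

lemma Rc_zero (s : ℕ) : Rc s 0 = 1 := by
  unfold Rc
  rw [Nat.sub_zero, Nat.add_zero]
  rw [div_self (by positivity)]

lemma Rc_succ (s u : ℕ) (h : u < s) :
    Rc s (u + 1) = Rc s u * (((s : ℝ) - u) / ((s : ℝ) + 2 + u)) := by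
  have h3 : ((s - (u + 1) : ℕ) : ℝ) = (s : ℝ) - (u : ℝ) - 1 := by
    have hh := Nat.cast_sub (R := ℝ) (show u + 1 ≤ s by omega)
    push_cast at hh ⊢
    rw [hh]; ring
  have e1 : (Nat.factorial (s - u) : ℝ)
      = ((s : ℝ) - u) * (Nat.factorial (s - (u + 1)) : ℝ) := by
    rw [show s - u = (s - (u + 1)) + 1 by omega, Nat.factorial_succ]
    push_cast [h3]
    ring
  have e2 : (Nat.factorial (s + 1 + (u + 1)) : ℝ)
      = ((s : ℝ) + 2 + u) * (Nat.factorial (s + 1 + u) : ℝ) := by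
    rw [show s + 1 + (u + 1) = (s + 1 + u) + 1 by omega, Nat.factorial_succ]
    push_cast
    ring
  have hd1 : ((Nat.factorial (s - (u + 1)) : ℝ)) ≠ 0 :=
    Nat.cast_ne_zero.mpr (Nat.factorial_ne_zero _)
  have hd2 : ((Nat.factorial (s + 1 + u) : ℝ)) ≠ 0 :=
    Nat.cast_ne_zero.mpr (Nat.factorial_ne_zero _)
  have hd3 : (0 : ℝ) < (s : ℝ) - u := by
    have : (u : ℝ) < s := by exact_mod_cast h
    linarith
  have hd4 : (0 : ℝ) < (s : ℝ) + 2 + u := by positivity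
  unfold Rc
  rw [e1, e2]
  field_simp

lemma Rc_le_one (s : ℕ) : ∀ u : ℕ, u ≤ s → Rc s u ≤ 1 := by
  intro u
  induction u with
  | zero => intro _; rw [Rc_zero]
  | succ k ih =>
    intro hk
    have hks : k < s := by omega
    rw [Rc_succ s k hks]
    have hc0 : (0 : ℝ) ≤ ((s : ℝ) - k) / ((s : ℝ) + 2 + k) := by
      apply div_nonneg
      · have : (k : ℝ) < s := by exact_mod_cast hks
        linarith
      · positivity
    have hc1 : ((s : ℝ) - k) / ((s : ℝ) + 2 + k) ≤ 1 := by
      rw [div_le_one (by positivity)]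
      have : (0 : ℝ) ≤ (k : ℝ) := Nat.cast_nonneg k
      linarith
    calc Rc s k * (((s : ℝ) - k) / ((s : ℝ) + 2 + k)) ≤ 1 * 1 :=
          mul_le_mul (ih (by omega)) hc1 hc0 zero_le_one
      _ = 1 := by ring

lemma Rc_ge (s : ℕ) : ∀ u : ℕ, u ≤ s →
    1 - (u : ℝ) * ((u : ℝ) + 1) / ((s : ℝ) + 1) ≤ Rc s u := by
  intro u
  induction u with
  | zero => intro _; rw [Rc_zero]; push_cast; norm_num
  | succ k ih =>
    intro hk
    have hks : k < s := by omega
    have hkR : (k : ℝ) < (s : ℝ) := by exact_mod_cast hks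
    have hs1 : (0 : ℝ) < (s : ℝ) + 1 := by positivity
    rw [Rc_succ s k hks]
    have hRnn := Rc_nonneg s k
    have hihk := ih (by omega)
    set c : ℝ := ((s : ℝ) - k) / ((s : ℝ) + 2 + k) with hc
    have hc0 : (0 : ℝ) ≤ c := by
      apply div_nonneg (by linarith) (by positivity)
    have hcb : 1 - (2 * (k : ℝ) + 2) / ((s : ℝ) + 1) ≤ c := by
      have h1 : 1 - (2 * (k : ℝ) + 2) / ((s : ℝ) + 1) = ((s : ℝ) - 2 * k - 1) / ((s : ℝ) + 1) := by
        field_simp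
        ring
      rw [h1, hc, div_le_div_iff₀ hs1 (by positivity)]
      nlinarith [Nat.cast_nonneg (α := ℝ) k]
    by_cases hcase : 1 - (k : ℝ) * ((k : ℝ) + 1) / ((s : ℝ) + 1) ≤ 0
    · have : 1 - ((k : ℝ) + 1) * (((k : ℝ) + 1) + 1) / ((s : ℝ) + 1) ≤ 0 := by
        have hmono : (k : ℝ) * ((k : ℝ) + 1) / ((s : ℝ) + 1)
            ≤ ((k : ℝ) + 1) * (((k : ℝ) + 1) + 1) / ((s : ℝ) + 1) := by
          gcongr <;> nlinarith [Nat.cast_nonneg (α := ℝ) k]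
        linarith
      push_cast
      calc 1 - ((k : ℝ) + 1) * (((k : ℝ) + 1) + 1) / ((s : ℝ) + 1) ≤ 0 := this
        _ ≤ Rc s k * c := mul_nonneg hRnn hc0
    · push_neg at hcase
      have hstep : (1 - (k : ℝ) * ((k : ℝ) + 1) / ((s : ℝ) + 1)) * c ≤ Rc s k * c :=
        mul_le_mul_of_nonneg_right hihk hc0
      have hstep2 : (1 - (k : ℝ) * ((k : ℝ) + 1) / ((s : ℝ) + 1)) *
            (1 - (2 * (k : ℝ) + 2) / ((s : ℝ) + 1))
          ≤ (1 - (k : ℝ) * ((k : ℝ) + 1) / ((s : ℝ) + 1)) * c :=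
        mul_le_mul_of_nonneg_left hcb hcase.le
      have hfinal : 1 - ((k : ℝ) + 1) * (((k : ℝ) + 1) + 1) / ((s : ℝ) + 1)
          ≤ (1 - (k : ℝ) * ((k : ℝ) + 1) / ((s : ℝ) + 1)) *
            (1 - (2 * (k : ℝ) + 2) / ((s : ℝ) + 1)) := by
        have e1 : (0 : ℝ) ≤ ((k : ℝ) * ((k : ℝ) + 1) / ((s : ℝ) + 1)) *
            ((2 * (k : ℝ) + 2) / ((s : ℝ) + 1)) := by positivity
        have e2 : (k : ℝ) * ((k : ℝ) + 1) / ((s : ℝ) + 1) + (2 * (k : ℝ) + 2) / ((s : ℝ) + 1)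
            = ((k : ℝ) + 1) * (((k : ℝ) + 1) + 1) / ((s : ℝ) + 1) := by
          field_simp
          ring
        nlinarith
      push_cast
      linarith

lemma S5_eq (s : ℕ) :
    S5 (s + 1) = Bc s / (2 * ((s : ℝ) + 1)) *
      ∑ u ∈ Finset.range (s + 1), Rc s u * αc ^ (2 * u) / (Nat.factorial (2 * u)) := by
  unfold S5
  rw [Nat.add_sub_cancel]
  have h1 : (3 / 2 - ((s + 1 : ℕ) : ℝ)) = 3 / 2 - ((s : ℝ) + 1) := by push_cast; ring
  have h2 : (-(((s + 1) : ℕ) : ℝ) + 1) = -(s : ℝ) := by push_cast; ring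
  rw [h1, h2]
  rw [show (-1 : ℝ) ^ s * rf (3 / 2 - ((s : ℝ) + 1)) (s + 1) *
      (∑ u ∈ Finset.range (s + 1), (-1 : ℝ) ^ u * rf (-(s : ℝ)) u * αc ^ (2 * u) /
        ((Nat.factorial (s + 1 + u) : ℝ) * (Nat.factorial (2 * u) : ℝ)))
    = ∑ u ∈ Finset.range (s + 1), ((-1 : ℝ) ^ s * rf (3 / 2 - ((s : ℝ) + 1)) (s + 1)) *
        ((-1 : ℝ) ^ u * rf (-(s : ℝ)) u * αc ^ (2 * u) /
          ((Nat.factorial (s + 1 + u) : ℝ) * (Nat.factorial (2 * u) : ℝ))) from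
    Finset.mul_sum _ _ _]
  rw [Finset.mul_sum]
  apply Finset.sum_congr rfl
  intro u hu
  have hus : u ≤ s := by
    have := Finset.mem_range.mp hu; omega
  rw [rf_L1 s]
  have hterm : (-1 : ℝ) ^ u * rf (-(s : ℝ)) u * αc ^ (2 * u) /
        ((Nat.factorial (s + 1 + u) : ℝ) * (Nat.factorial (2 * u) : ℝ))
      = ((-1 : ℝ) ^ u * rf (-(s : ℝ)) u) * (αc ^ (2 * u) /
        ((Nat.factorial (s + 1 + u) : ℝ) * (Nat.factorial (2 * u) : ℝ))) := by ring
  rw [hterm, rf_L2 s u hus]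
  unfold Rc Bc
  have hfs : ((Nat.factorial s : ℝ)) ≠ 0 := Nat.cast_ne_zero.mpr (Nat.factorial_ne_zero _)
  have hfsu : ((Nat.factorial (s - u) : ℝ)) ≠ 0 := Nat.cast_ne_zero.mpr (Nat.factorial_ne_zero _)
  have hfs1u : ((Nat.factorial (s + 1 + u) : ℝ)) ≠ 0 := Nat.cast_ne_zero.mpr (Nat.factorial_ne_zero _)
  have hf2u : ((Nat.factorial (2 * u) : ℝ)) ≠ 0 := Nat.cast_ne_zero.mpr (Nat.factorial_ne_zero _)
  have hf2s : ((Nat.factorial (2 * s) : ℝ)) ≠ 0 := Nat.cast_ne_zero.mpr (Nat.factorial_ne_zero _)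
  have h4 : ((4 : ℝ)) ^ s ≠ 0 := by positivity
  have hfs1 : (Nat.factorial (s + 1) : ℝ) = ((s : ℝ) + 1) * Nat.factorial s := by
    rw [Nat.factorial_succ]; push_cast; ring
  rw [hfs1]
  field_simp

end Aux2


section Aux3

lemma alpha_pos : 0 < αc := by unfold αc; positivity

lemma alpha_le : αc ≤ 0.525 := by
  unfold αc
  nlinarith [Real.pi_lt_d2]

lemma alpha_sq : αc ^ 2 ≤ 0.2757 := by
  nlinarith [alpha_le, alpha_pos]

lemma nat_fact_ineq : ∀ k : ℕ, (k + 1) * (k + 2) * 2 ^ k ≤ Nat.factorial (2 * (k + 1)) := by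
  intro k
  induction k with
  | zero => simp [Nat.factorial]
  | succ n ih =>
    have hlast : Nat.factorial (2 * (n + 2))
        = (2 * n + 4) * ((2 * n + 3) * Nat.factorial (2 * (n + 1))) := by
      rw [show 2 * (n + 2) = (2 * (n + 1) + 1) + 1 by omega, Nat.factorial_succ,
        Nat.factorial_succ]
      ring_nf
    calc (n + 1 + 1) * (n + 1 + 2) * 2 ^ (n + 1) = ((n + 2) * (n + 3) * 2) * 2 ^ n := by ring
      _ ≤ ((2 * n + 4) * (2 * n + 3) * ((n + 1) * (n + 2))) * 2 ^ n := by
          apply Nat.mul_le_mul_right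
          calc (n + 2) * (n + 3) * 2 = (n + 2) * (2 * (n + 3)) := by ring
            _ ≤ (n + 2) * (12 * (n + 1)) := Nat.mul_le_mul_left _ (by omega)
            _ = 12 * ((n + 1) * (n + 2)) := by ring
            _ ≤ ((2 * n + 4) * (2 * n + 3)) * ((n + 1) * (n + 2)) := by
                apply Nat.mul_le_mul_right
                calc 12 = 4 * 3 := by norm_num
                  _ ≤ (2 * n + 4) * (2 * n + 3) := Nat.mul_le_mul (by omega) (by omega)
            _ = (2 * n + 4) * (2 * n + 3) * ((n + 1) * (n + 2)) := by ring
      _ = (2 * n + 4) * ((2 * n + 3) * ((n + 1) * (n + 2) * 2 ^ n)) := by ring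
      _ ≤ (2 * n + 4) * ((2 * n + 3) * Nat.factorial (2 * (n + 1))) :=
          Nat.mul_le_mul_left _ (Nat.mul_le_mul_left _ ih)
      _ = Nat.factorial (2 * (n + 2)) := hlast.symm

lemma term_bound (k : ℕ) :
    ((k : ℝ) + 1) * ((k : ℝ) + 2) * αc ^ (2 * (k + 1)) / (Nat.factorial (2 * (k + 1)))
      ≤ 0.2757 * 0.14 ^ k := by
  have hfac : (0 : ℝ) < (Nat.factorial (2 * (k + 1)) : ℝ) := by
    exact_mod_cast Nat.factorial_pos _
  have hkey : ((k : ℝ) + 1) * ((k : ℝ) + 2) * 2 ^ k ≤ (Nat.factorial (2 * (k + 1)) : ℝ) := by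
    exact_mod_cast nat_fact_ineq k
  have hknn : (0 : ℝ) ≤ (k : ℝ) := Nat.cast_nonneg k
  have hα2 : (0 : ℝ) ≤ αc ^ 2 := by positivity
  have hpow : αc ^ (2 * (k + 1)) = αc ^ 2 * (αc ^ 2) ^ k := by
    rw [← pow_mul, ← pow_add]
    congr 1
    omega
  have hpk : (αc ^ 2) ^ k ≤ (0.28 : ℝ) ^ k := by
    apply pow_le_pow_left₀ hα2
    nlinarith [alpha_sq]
  rw [div_le_iff₀ hfac, hpow]
  have step1 : ((k : ℝ) + 1) * ((k : ℝ) + 2) * (αc ^ 2 * (αc ^ 2) ^ k)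
      ≤ 0.2757 * (((k : ℝ) + 1) * ((k : ℝ) + 2) * (0.28) ^ k) := by
    have hq : αc ^ 2 * (αc ^ 2) ^ k ≤ 0.2757 * (0.28) ^ k := by
      have := mul_le_mul alpha_sq hpk (by positivity) (by norm_num)
      linarith
    nlinarith [mul_nonneg (mul_nonneg (by linarith : (0:ℝ) ≤ (k:ℝ)+1)
      (by linarith : (0:ℝ) ≤ (k:ℝ)+2)) hα2, pow_nonneg hα2 k,
      mul_le_mul_of_nonneg_left hq (mul_nonneg (by linarith : (0:ℝ) ≤ (k:ℝ)+1)
        (by linarith : (0:ℝ) ≤ (k:ℝ)+2))]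
  have step2 : 0.2757 * (((k : ℝ) + 1) * ((k : ℝ) + 2) * (0.28) ^ k)
      ≤ 0.2757 * 0.14 ^ k * (Nat.factorial (2 * (k + 1)) : ℝ) := by
    have h28 : (0.28 : ℝ) ^ k = 0.14 ^ k * 2 ^ k := by
      rw [← mul_pow]
      norm_num
    rw [h28]
    have : ((k : ℝ) + 1) * ((k : ℝ) + 2) * (0.14 ^ k * 2 ^ k)
        = 0.14 ^ k * (((k : ℝ) + 1) * ((k : ℝ) + 2) * 2 ^ k) := by ring
    rw [this]
    have h14 : (0 : ℝ) ≤ (0.14 : ℝ) ^ k := by positivity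
    calc (0.2757 : ℝ) * (0.14 ^ k * (((k : ℝ) + 1) * ((k : ℝ) + 2) * 2 ^ k))
        ≤ 0.2757 * (0.14 ^ k * (Nat.factorial (2 * (k + 1)) : ℝ)) := by
          apply mul_le_mul_of_nonneg_left _ (by norm_num)
          exact mul_le_mul_of_nonneg_left hkey h14
      _ = 0.2757 * 0.14 ^ k * (Nat.factorial (2 * (k + 1)) : ℝ) := by ring
  linarith

lemma sum_sq_le (n : ℕ) :
    ∑ u ∈ Finset.range n, (u : ℝ) * ((u : ℝ) + 1) * αc ^ (2 * u) / (Nat.factorial (2 * u))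
      ≤ 0.33 := by
  cases n with
  | zero => simp; norm_num
  | succ m =>
    rw [Finset.sum_range_succ']
    have h0 : ((0 : ℕ) : ℝ) * (((0 : ℕ) : ℝ) + 1) * αc ^ (2 * 0) / (Nat.factorial (2 * 0)) = 0 := by
      norm_num
    rw [h0, add_zero]
    have hterm : ∀ k ∈ Finset.range m,
        ((k + 1 : ℕ) : ℝ) * (((k + 1 : ℕ) : ℝ) + 1) * αc ^ (2 * (k + 1)) /
          (Nat.factorial (2 * (k + 1))) ≤ 0.2757 * 0.14 ^ k := by
      intro k _
      have := term_bound k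
      push_cast
      push_cast at this
      convert this using 3 <;> ring
    calc ∑ k ∈ Finset.range m, ((k + 1 : ℕ) : ℝ) * (((k + 1 : ℕ) : ℝ) + 1) * αc ^ (2 * (k + 1)) /
          (Nat.factorial (2 * (k + 1)))
        ≤ ∑ k ∈ Finset.range m, (0.2757 : ℝ) * 0.14 ^ k := Finset.sum_le_sum hterm
      _ = 0.2757 * ∑ k ∈ Finset.range m, (0.14 : ℝ) ^ k := by rw [Finset.mul_sum]
      _ ≤ 0.2757 * (1 / 0.86) := by
          apply mul_le_mul_of_nonneg_left _ (by norm_num)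
          have h1 : (0 : ℝ) ≤ (0.14 : ℝ) ^ m := by positivity
          have heq : ∑ k ∈ Finset.range m, (0.14 : ℝ) ^ k = (1 - 0.14 ^ m) / 0.86 := by
            rw [geom_sum_eq (by norm_num) m, div_eq_div_iff (by norm_num) (by norm_num)]
            ring
          rw [heq]
          gcongr
          linarith
      _ ≤ 0.33 := by norm_num

lemma parity_sum (n : ℕ) :
    (∑ i ∈ Finset.range (2 * n), αc ^ i / (Nat.factorial i))
      + (∑ i ∈ Finset.range (2 * n), (-αc) ^ i / (Nat.factorial i))
    = 2 * ∑ u ∈ Finset.range n, αc ^ (2 * u) / (Nat.factorial (2 * u)) := by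
  induction n with
  | zero => simp
  | succ m ih =>
    rw [show 2 * (m + 1) = (2 * m + 1) + 1 by omega]
    rw [Finset.sum_range_succ (f := fun i => αc ^ i / (Nat.factorial i : ℝ)),
      Finset.sum_range_succ (f := fun i => αc ^ i / (Nat.factorial i : ℝ)),
      Finset.sum_range_succ (f := fun i => (-αc) ^ i / (Nat.factorial i : ℝ)),
      Finset.sum_range_succ (f := fun i => (-αc) ^ i / (Nat.factorial i : ℝ)),
      Finset.sum_range_succ]
    have h1 : (-αc) ^ (2 * m) = αc ^ (2 * m) := Even.neg_pow (even_two_mul m) αc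
    have h2 : (-αc) ^ (2 * m + 1) = -αc ^ (2 * m + 1) := Odd.neg_pow ⟨m, by omega⟩ αc
    rw [h1, h2, neg_div]
    linarith [ih]

lemma cosh_P (n : ℕ) (hn : 1 ≤ n) :
    |Real.cosh αc - ∑ u ∈ Finset.range n, αc ^ (2 * u) / (Nat.factorial (2 * u))|
      ≤ αc ^ (2 * n) * ((2 * (n : ℝ) + 1) / (Nat.factorial (2 * n) * (2 * (n : ℝ)))) := by
  have hα : |αc| ≤ 1 := by
    rw [abs_of_nonneg alpha_pos.le]
    linarith [alpha_le]
  have hα' : |(-αc)| ≤ 1 := by rwa [abs_neg]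
  have h2n : 0 < 2 * n := by omega
  have e1 := Real.exp_bound hα h2n
  have e2 := Real.exp_bound hα' h2n
  rw [abs_of_nonneg alpha_pos.le] at e1
  rw [abs_neg, abs_of_nonneg alpha_pos.le] at e2
  have hpar := parity_sum n
  have hsplit : Real.cosh αc - ∑ u ∈ Finset.range n, αc ^ (2 * u) / (Nat.factorial (2 * u))
      = ((Real.exp αc - ∑ i ∈ Finset.range (2 * n), αc ^ i / (Nat.factorial i))
        + (Real.exp (-αc) - ∑ i ∈ Finset.range (2 * n), (-αc) ^ i / (Nat.factorial i))) / 2 := by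
    rw [Real.cosh_eq]
    field_simp
    linarith [hpar]
  rw [hsplit]
  have habs : |((Real.exp αc - ∑ i ∈ Finset.range (2 * n), αc ^ i / (Nat.factorial i))
        + (Real.exp (-αc) - ∑ i ∈ Finset.range (2 * n), (-αc) ^ i / (Nat.factorial i))) / 2|
      ≤ (|Real.exp αc - ∑ i ∈ Finset.range (2 * n), αc ^ i / (Nat.factorial i)|
        + |Real.exp (-αc) - ∑ i ∈ Finset.range (2 * n), (-αc) ^ i / (Nat.factorial i)|) / 2 := by
    rw [abs_div]
    have : |(2:ℝ)| = 2 := by norm_num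
    rw [this]
    gcongr
    exact abs_add_le _ _
  have hfinal : αc ^ (2 * n) * (((2 * n : ℕ).succ : ℝ) / (Nat.factorial (2 * n) * (2 * n : ℕ)))
      = αc ^ (2 * n) * ((2 * (n : ℝ) + 1) / (Nat.factorial (2 * n) * (2 * (n : ℝ)))) := by
    push_cast
    ring_nf
  calc _ ≤ _ := habs
    _ ≤ (αc ^ (2 * n) * (((2 * n : ℕ).succ : ℝ) / (Nat.factorial (2 * n) * (2 * n : ℕ)))
        + αc ^ (2 * n) * (((2 * n : ℕ).succ : ℝ) / (Nat.factorial (2 * n) * (2 * n : ℕ)))) / 2 := by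
        gcongr
    _ = αc ^ (2 * n) * (((2 * n : ℕ).succ : ℝ) / (Nat.factorial (2 * n) * (2 * n : ℕ))) := by ring
    _ = _ := hfinal

lemma Egrow : ∀ t : ℕ, 2 ≤ t →
    αc ^ (2 * t) * (2 * (t : ℝ) + 1) ≤ 0.02 * (Nat.factorial (2 * t) : ℝ) := by
  intro t ht
  induction t with
  | zero => omega
  | succ n ih =>
    by_cases hn2 : 2 ≤ n
    · have ihh := ih hn2
      have hf : (Nat.factorial (2 * (n + 1)) : ℝ)
          = (2 * (n : ℝ) + 2) * ((2 * (n : ℝ) + 1) * (Nat.factorial (2 * n) : ℝ)) := by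
        rw [show 2 * (n + 1) = (2 * n + 1) + 1 by omega, Nat.factorial_succ, Nat.factorial_succ]
        push_cast
        ring
      have hpow : αc ^ (2 * (n + 1)) = αc ^ 2 * αc ^ (2 * n) := by
        rw [← pow_add]
        congr 1
        omega
      rw [hf, hpow]
      push_cast
      have hxp : (0 : ℝ) ≤ αc ^ (2 * n) := pow_nonneg alpha_pos.le _
      have hfp : (0 : ℝ) < (Nat.factorial (2 * n) : ℝ) := by exact_mod_cast Nat.factorial_pos _
      have hnR : (2 : ℝ) ≤ (n : ℝ) := by exact_mod_cast hn2
      have hnn : (0 : ℝ) ≤ αc ^ (2 * n) * (2 * (n : ℝ) + 3) :=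
        mul_nonneg (pow_nonneg alpha_pos.le _) (by positivity)
      calc αc ^ 2 * αc ^ (2 * n) * (2 * ((n : ℝ) + 1) + 1)
          = αc ^ 2 * (αc ^ (2 * n) * (2 * (n : ℝ) + 3)) := by ring
        _ ≤ 0.2757 * (αc ^ (2 * n) * (2 * (n : ℝ) + 3)) :=
            mul_le_mul_of_nonneg_right alpha_sq hnn
        _ ≤ 0.2757 * (2 * (αc ^ (2 * n) * (2 * (n : ℝ) + 1))) := by
            apply mul_le_mul_of_nonneg_left _ (by norm_num)
            nlinarith [mul_nonneg hxp (by linarith : (0 : ℝ) ≤ 2 * (n : ℝ) - 1)]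
        _ = 0.5514 * (αc ^ (2 * n) * (2 * (n : ℝ) + 1)) := by ring
        _ ≤ 0.5514 * (0.02 * (Nat.factorial (2 * n) : ℝ)) := by
            apply mul_le_mul_of_nonneg_left _ (by norm_num)
            linarith [ihh]
        _ ≤ 0.02 * ((2 * (n : ℝ) + 2) * ((2 * (n : ℝ) + 1) * (Nat.factorial (2 * n) : ℝ))) := by
            have h30 : (30 : ℝ) ≤ (2 * (n : ℝ) + 2) * (2 * (n : ℝ) + 1) := by nlinarith
            nlinarith [mul_le_mul_of_nonneg_right h30 hfp.le]
    · have hn : n = 1 := by omega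
      subst hn
      have hfact : ((Nat.factorial (2 * (1 + 1)) : ℕ) : ℝ) = 24 := by
        norm_num [Nat.factorial]
      rw [hfact]
      push_cast
      nlinarith [alpha_sq, sq_nonneg αc, sq_nonneg (αc ^ 2)]

end Aux3


set_option maxHeartbeats 1000000 in
/-- asymptotic estimate for `S_5(t)`. -/
theorem S5_estimate (t : ℕ) (ht : 2 ≤ t) :
    |S5 t - Real.cosh αc / (2 * Real.sqrt π * (t : ℝ) ^ ((3 : ℝ) / 2))| ≤
      1.2 * Real.cosh αc / (2 * Real.sqrt π * (t : ℝ) ^ ((5 : ℝ) / 2)) := by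
  obtain ⟨s, rfl⟩ : ∃ s, t = s + 1 := ⟨t - 1, by omega⟩
  have hs : 1 ≤ s := by omega
  have hsR : (1 : ℝ) ≤ (s : ℝ) := by exact_mod_cast hs
  have hτ0 : (0 : ℝ) < (s : ℝ) + 1 := by linarith
  have hC1 : 1 ≤ Real.cosh αc := Real.one_le_cosh αc
  -- square root facts
  have hq0 : 0 < Real.sqrt π := Real.sqrt_pos.mpr Real.pi_pos
  have ha0 : 0 < Real.sqrt ((s : ℝ) + 1) := Real.sqrt_pos.mpr hτ0
  have hb0 : 0 < Real.sqrt (s : ℝ) := Real.sqrt_pos.mpr (by linarith)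
  have ha2 : Real.sqrt ((s : ℝ) + 1) ^ 2 = (s : ℝ) + 1 := Real.sq_sqrt hτ0.le
  have hb2 : Real.sqrt (s : ℝ) ^ 2 = (s : ℝ) := Real.sq_sqrt (by linarith)
  have hb1 : 1 ≤ Real.sqrt (s : ℝ) := by
    rw [show (1 : ℝ) = Real.sqrt 1 by simp]
    exact Real.sqrt_le_sqrt hsR
  have hba : Real.sqrt (s : ℝ) ≤ Real.sqrt ((s : ℝ) + 1) :=
    Real.sqrt_le_sqrt (by linarith)
  set C : ℝ := Real.cosh αc with hCdef
  set q : ℝ := Real.sqrt π with hqdef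
  set a : ℝ := Real.sqrt ((s : ℝ) + 1) with hadef
  set b : ℝ := Real.sqrt (s : ℝ) with hbdef
  have hab1 : (a - b) * (a + b) = 1 := by linear_combination ha2 - hb2
  have hiab2 : 2 * b * (a - b) ≤ 1 := by nlinarith [hab1, sq_nonneg (a - b)]
  have hd0 : 0 ≤ a - b := by linarith
  have H1 : (0 : ℝ) ≤ (1 - 2 * b * (a - b)) * (C * b) :=
    mul_nonneg (by linarith) (mul_nonneg (by linarith) hb0.le)
  have H2 : (0 : ℝ) ≤ (b - 1) * ((a - b) * C) :=
    mul_nonneg (by linarith) (mul_nonneg hd0 (by linarith))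
  have H3 : (0 : ℝ) ≤ (b - 1) * (a - b) := mul_nonneg (by linarith) hd0
  have H4 : (0 : ℝ) ≤ (b - 1) * C := mul_nonneg (by linarith) (by linarith)
  have H5 : (0 : ℝ) ≤ (C - 1) * b := mul_nonneg (by linarith) hb0.le
  have H6 : (0 : ℝ) ≤ (C - 1) * (b - 1) := mul_nonneg (by linarith) (by linarith)
  have H7 : (0 : ℝ) ≤ (1 - 2 * b * (a - b)) * C := mul_nonneg (by linarith) (by linarith)
  have hpoly : a * ((s : ℝ) + 1) * C + 0.01 * a ≤ C * ((s : ℝ) + 1) * b + 1.2 * C * b := by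
    have hτb : (s : ℝ) + 1 = b ^ 2 + 1 := by rw [hb2]
    rw [hτb]
    linarith [H1, H2, H3, H4, H5, H6, H7, hiab2, hd0, hb1, hC1, hb0.le]
  -- basic sum facts
  have hxnn : ∀ u : ℕ, (0 : ℝ) ≤ αc ^ (2 * u) / (Nat.factorial (2 * u)) := fun u =>
    div_nonneg (pow_nonneg alpha_pos.le _) (Nat.cast_nonneg _)
  have hS5 : S5 (s + 1) = Bc s / (2 * ((s : ℝ) + 1)) *
      ∑ u ∈ Finset.range (s + 1), Rc s u * αc ^ (2 * u) / (Nat.factorial (2 * u)) := S5_eq s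
  have hT0 : 0 ≤ ∑ u ∈ Finset.range (s + 1), Rc s u * αc ^ (2 * u) / (Nat.factorial (2 * u)) := by
    apply Finset.sum_nonneg
    intro u _
    rw [mul_div_assoc]
    exact mul_nonneg (Rc_nonneg s u) (hxnn u)
  have hTP : (∑ u ∈ Finset.range (s + 1), Rc s u * αc ^ (2 * u) / (Nat.factorial (2 * u)))
      ≤ ∑ u ∈ Finset.range (s + 1), αc ^ (2 * u) / (Nat.factorial (2 * u)) := by
    apply Finset.sum_le_sum
    intro u hu
    have hu' : u ≤ s := by have := Finset.mem_range.mp hu; omega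
    rw [mul_div_assoc]
    calc Rc s u * (αc ^ (2 * u) / (Nat.factorial (2 * u)))
        ≤ 1 * (αc ^ (2 * u) / (Nat.factorial (2 * u))) :=
          mul_le_mul_of_nonneg_right (Rc_le_one s u hu') (hxnn u)
      _ = αc ^ (2 * u) / (Nat.factorial (2 * u)) := one_mul _
  have hTlow : (∑ u ∈ Finset.range (s + 1), αc ^ (2 * u) / (Nat.factorial (2 * u)))
        - 0.33 / ((s : ℝ) + 1)
      ≤ ∑ u ∈ Finset.range (s + 1), Rc s u * αc ^ (2 * u) / (Nat.factorial (2 * u)) := by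
    have hsum2 := sum_sq_le (s + 1)
    have key : (∑ u ∈ Finset.range (s + 1), αc ^ (2 * u) / (Nat.factorial (2 * u)))
          - (1 / ((s : ℝ) + 1)) * ∑ u ∈ Finset.range (s + 1),
              (u : ℝ) * ((u : ℝ) + 1) * αc ^ (2 * u) / (Nat.factorial (2 * u))
        ≤ ∑ u ∈ Finset.range (s + 1), Rc s u * αc ^ (2 * u) / (Nat.factorial (2 * u)) := by
      rw [Finset.mul_sum, ← Finset.sum_sub_distrib]
      apply Finset.sum_le_sum
      intro u hu
      have hu' : u ≤ s := by have := Finset.mem_range.mp hu; omega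
      have hRg := Rc_ge s u hu'
      have hfu : ((Nat.factorial (2 * u) : ℝ)) ≠ 0 := Nat.cast_ne_zero.mpr (Nat.factorial_ne_zero _)
      have e : αc ^ (2 * u) / (Nat.factorial (2 * u))
            - (1 / ((s : ℝ) + 1)) * ((u : ℝ) * ((u : ℝ) + 1) * αc ^ (2 * u) / (Nat.factorial (2 * u)))
          = (1 - (u : ℝ) * ((u : ℝ) + 1) / ((s : ℝ) + 1)) * (αc ^ (2 * u) / (Nat.factorial (2 * u))) := by
        field_simp
      rw [e]
      exact (mul_le_mul_of_nonneg_right hRg (hxnn u)).trans_eq (mul_div_assoc _ _ _).symm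
    have h2 : (1 / ((s : ℝ) + 1)) * (∑ u ∈ Finset.range (s + 1),
          (u : ℝ) * ((u : ℝ) + 1) * αc ^ (2 * u) / (Nat.factorial (2 * u)))
        ≤ 0.33 / ((s : ℝ) + 1) := by
      calc (1 / ((s : ℝ) + 1)) * (∑ u ∈ Finset.range (s + 1),
            (u : ℝ) * ((u : ℝ) + 1) * αc ^ (2 * u) / (Nat.factorial (2 * u)))
          ≤ (1 / ((s : ℝ) + 1)) * 0.33 := mul_le_mul_of_nonneg_left hsum2 (by positivity)
        _ = 0.33 / ((s : ℝ) + 1) := by ring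
    linarith
  -- cosh bounds on the partial sum
  have hcosh := cosh_P (s + 1) (by omega)
  have hEg := Egrow (s + 1) (by omega)
  push_cast at hcosh hEg
  have hfacp : (0 : ℝ) < (Nat.factorial (2 * (s + 1)) : ℝ) := by
    exact_mod_cast Nat.factorial_pos _
  have hE : αc ^ (2 * (s + 1)) * ((2 * ((s : ℝ) + 1) + 1) /
        (Nat.factorial (2 * (s + 1)) * (2 * ((s : ℝ) + 1))))
      ≤ 0.01 / ((s : ℝ) + 1) := by
    have e : αc ^ (2 * (s + 1)) * ((2 * ((s : ℝ) + 1) + 1) /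
          (Nat.factorial (2 * (s + 1)) * (2 * ((s : ℝ) + 1))))
        = (αc ^ (2 * (s + 1)) * (2 * ((s : ℝ) + 1) + 1)) /
          (Nat.factorial (2 * (s + 1)) * (2 * ((s : ℝ) + 1))) := by ring
    rw [e, div_le_div_iff₀ (by positivity) hτ0]
    linarith [mul_le_mul_of_nonneg_right hEg hτ0.le]
  have hPC1 : (∑ u ∈ Finset.range (s + 1), αc ^ (2 * u) / (Nat.factorial (2 * u)))
      ≤ C + 0.01 / ((s : ℝ) + 1) := by
    have h := (abs_le.mp hcosh).1
    linarith
  have hPC2 : C - 0.01 / ((s : ℝ) + 1)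
      ≤ ∑ u ∈ Finset.range (s + 1), αc ^ (2 * u) / (Nat.factorial (2 * u)) := by
    have h := (abs_le.mp hcosh).2
    linarith
  -- Wallis bounds
  have hBl := Bc_lower s
  have hBu := Bc_upper s hs
  rw [Real.sqrt_mul Real.pi_pos.le] at hBl hBu
  rw [← hqdef, ← hadef] at hBl
  rw [← hqdef, ← hbdef] at hBu
  -- rpow rewriting
  have hcastg : ((s + 1 : ℕ) : ℝ) = (s : ℝ) + 1 := by push_cast; ring
  have hr1 : ((s + 1 : ℕ) : ℝ) ^ ((3 : ℝ) / 2) = ((s : ℝ) + 1) * a := by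
    rw [hcastg, show (3 : ℝ) / 2 = 1 + 1 / 2 by norm_num, Real.rpow_add hτ0, Real.rpow_one,
      ← Real.sqrt_eq_rpow, hadef]
  have hr2 : ((s + 1 : ℕ) : ℝ) ^ ((5 : ℝ) / 2) = ((s : ℝ) + 1) ^ 2 * a := by
    rw [hcastg, show (5 : ℝ) / 2 = 2 + 1 / 2 by norm_num, Real.rpow_add hτ0,
      ← Real.sqrt_eq_rpow, hadef, show (2 : ℝ) = ((2 : ℕ) : ℝ) by norm_num, Real.rpow_natCast]
  rw [hr1, hr2, hS5, abs_le]
  have hqne : q ≠ 0 := hq0.ne'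
  have hane : a ≠ 0 := ha0.ne'
  have hbne : b ≠ 0 := hb0.ne'
  have hτne : ((s : ℝ) + 1) ≠ 0 := hτ0.ne'
  have h033 : (0.34 : ℝ) / ((s : ℝ) + 1) = 0.33 / ((s : ℝ) + 1) + 0.01 / ((s : ℝ) + 1) := by
    rw [← add_div]
    norm_num
  constructor
  · -- lower bound
    have hTlow2 : C - 0.34 / ((s : ℝ) + 1)
        ≤ ∑ u ∈ Finset.range (s + 1), Rc s u * αc ^ (2 * u) / (Nat.factorial (2 * u)) := by
      rw [h033]
      linarith
    have hm0 : (0 : ℝ) ≤ C - 0.34 / ((s : ℝ) + 1) := by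
      have h34 : 0.34 / ((s : ℝ) + 1) ≤ 0.2 := by
        rw [div_le_iff₀ hτ0]
        linarith
      linarith
    have h1 : (1 / (q * a)) * (C - 0.34 / ((s : ℝ) + 1))
        ≤ Bc s * ∑ u ∈ Finset.range (s + 1), Rc s u * αc ^ (2 * u) / (Nat.factorial (2 * u)) :=
      mul_le_mul hBl hTlow2 hm0 (Bc_pos s).le
    have h2 : ((1 / (q * a)) * (C - 0.34 / ((s : ℝ) + 1))) / (2 * ((s : ℝ) + 1))
        ≤ Bc s / (2 * ((s : ℝ) + 1)) *
          ∑ u ∈ Finset.range (s + 1), Rc s u * αc ^ (2 * u) / (Nat.factorial (2 * u)) := by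
      have e : Bc s / (2 * ((s : ℝ) + 1)) *
            (∑ u ∈ Finset.range (s + 1), Rc s u * αc ^ (2 * u) / (Nat.factorial (2 * u)))
          = (Bc s * ∑ u ∈ Finset.range (s + 1),
              Rc s u * αc ^ (2 * u) / (Nat.factorial (2 * u))) / (2 * ((s : ℝ) + 1)) := by
        ring
      rw [e]
      gcongr
    have key2 : C / (2 * q * (((s : ℝ) + 1) * a)) - 1.2 * C / (2 * q * (((s : ℝ) + 1) ^ 2 * a))
        ≤ ((1 / (q * a)) * (C - 0.34 / ((s : ℝ) + 1))) / (2 * ((s : ℝ) + 1)) := by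
      have e1 : ((1 / (q * a)) * (C - 0.34 / ((s : ℝ) + 1))) / (2 * ((s : ℝ) + 1))
          = (C * ((s : ℝ) + 1) - 0.34) / (2 * q * a * ((s : ℝ) + 1) ^ 2) := by
        rw [div_eq_div_iff (mul_pos two_pos hτ0).ne'
          (mul_pos (mul_pos (mul_pos two_pos hq0) ha0) (pow_pos hτ0 2)).ne']
        field_simp
      have e2 : C / (2 * q * (((s : ℝ) + 1) * a)) - 1.2 * C / (2 * q * (((s : ℝ) + 1) ^ 2 * a))
          = (C * ((s : ℝ) + 1) - 1.2 * C) / (2 * q * a * ((s : ℝ) + 1) ^ 2) := by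
        field_simp
      rw [e1, e2, div_le_div_iff₀ (by positivity) (by positivity)]
      linarith [mul_le_mul_of_nonneg_right
        (show C * ((s : ℝ) + 1) - 1.2 * C ≤ C * ((s : ℝ) + 1) - 0.34 by linarith)
        (by positivity : (0 : ℝ) ≤ 2 * q * a * ((s : ℝ) + 1) ^ 2)]
    linarith
  · -- upper bound
    have hTup : (∑ u ∈ Finset.range (s + 1), Rc s u * αc ^ (2 * u) / (Nat.factorial (2 * u)))
        ≤ C + 0.01 / ((s : ℝ) + 1) := by linarith
    have h1 : Bc s * (∑ u ∈ Finset.range (s + 1), Rc s u * αc ^ (2 * u) / (Nat.factorial (2 * u)))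
        ≤ (1 / (q * b)) * (C + 0.01 / ((s : ℝ) + 1)) :=
      mul_le_mul hBu hTup hT0 (by positivity)
    have h2 : Bc s / (2 * ((s : ℝ) + 1)) *
          (∑ u ∈ Finset.range (s + 1), Rc s u * αc ^ (2 * u) / (Nat.factorial (2 * u)))
        ≤ ((1 / (q * b)) * (C + 0.01 / ((s : ℝ) + 1))) / (2 * ((s : ℝ) + 1)) := by
      have e : Bc s / (2 * ((s : ℝ) + 1)) *
            (∑ u ∈ Finset.range (s + 1), Rc s u * αc ^ (2 * u) / (Nat.factorial (2 * u)))
          = (Bc s * ∑ u ∈ Finset.range (s + 1),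
              Rc s u * αc ^ (2 * u) / (Nat.factorial (2 * u))) / (2 * ((s : ℝ) + 1)) := by
        ring
      rw [e]
      gcongr
    have key1 : ((1 / (q * b)) * (C + 0.01 / ((s : ℝ) + 1))) / (2 * ((s : ℝ) + 1))
        ≤ C / (2 * q * (((s : ℝ) + 1) * a)) + 1.2 * C / (2 * q * (((s : ℝ) + 1) ^ 2 * a)) := by
      have e1 : ((1 / (q * b)) * (C + 0.01 / ((s : ℝ) + 1))) / (2 * ((s : ℝ) + 1))
          = (C * ((s : ℝ) + 1) + 0.01) / (2 * q * b * ((s : ℝ) + 1) ^ 2) := by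
        rw [div_eq_div_iff (mul_pos two_pos hτ0).ne'
          (mul_pos (mul_pos (mul_pos two_pos hq0) hb0) (pow_pos hτ0 2)).ne']
        field_simp
      have e2 : C / (2 * q * (((s : ℝ) + 1) * a)) + 1.2 * C / (2 * q * (((s : ℝ) + 1) ^ 2 * a))
          = (C * ((s : ℝ) + 1) + 1.2 * C) / (2 * q * a * ((s : ℝ) + 1) ^ 2) := by
        field_simp
      rw [e1, e2, div_le_div_iff₀ (by positivity) (by positivity)]
      linarith [mul_le_mul_of_nonneg_left hpoly
        (by positivity : (0 : ℝ) ≤ 2 * q * ((s : ℝ) + 1) ^ 2)]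
    linarith
end
end
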